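/- arXiv:1808.07376 — 6 statements merged into one kernel-verified Lean document; each statement's English description precedes it below -/
import Mathlib

section
/- If an observable T on state space S can be measured without disturbance (i.e., there exist operations Φ_i with Σ_i Φ_i = id and u∘Φ_i = T_i), then T is compatible with every observable A on S: the effects G_{ij} = A_j ∘ Φ_i define a joint observable. -/
/-- An effect on a state space `S`. -/
def IsEffect {V : Type*} [AddCommGroup V] [Module ℝ V]
    (S : Set V) (e : V →ₗ[ℝ] ℝ) : Prop :=
  ∀ s ∈ S, 0 ≤ e s ∧ e s ≤ 1

/-- An observable with finite outcome set `ι`. -/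
def IsObservable {V : Type*} [AddCommGroup V] [Module ℝ V]
    (S : Set V) (u : V →ₗ[ℝ] ℝ) {ι : Type*} [Fintype ι]
    (A : ι → (V →ₗ[ℝ] ℝ)) : Prop :=
  (∀ i, IsEffect S (A i)) ∧ ∑ i, A i = u

/-- Joint-observable compatibility of two observables. -/
def Compatible {V : Type*} [AddCommGroup V] [Module ℝ V]
    (S : Set V) (u : V →ₗ[ℝ] ℝ) {ι κ : Type*} [Fintype ι] [Fintype κ]
    (A : ι → (V →ₗ[ℝ] ℝ)) (B : κ → (V →ₗ[ℝ] ℝ)) : Prop :=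
  ∃ G : ι × κ → (V →ₗ[ℝ] ℝ), IsObservable S u G ∧
    (∀ i, ∑ j, G (i, j) = A i) ∧ (∀ j, ∑ i, G (i, j) = B j)

/-- An operation: a (linearly extended) map sending states into the subnormalized
states, i.e. into `{x ≥ 0 : u x ≤ 1}`, where `x ≥ 0` means `x` lies in the cone
generated by `S`. -/
def IsOperation {V : Type*} [AddCommGroup V] [Module ℝ V]
    (S : Set V) (u : V →ₗ[ℝ] ℝ) (Φ : V →ₗ[ℝ] V) : Prop :=
  ∀ s ∈ S, (∃ c : ℝ, 0 ≤ c ∧ ∃ t ∈ S, Φ s = c • t) ∧ u (Φ s) ≤ 1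

/-- If an observable `T` can be measured without disturbance (there are
operations `Φ i` with `∑ i, Φ i = id` and `u ∘ Φ i = T i`), then `T` is compatible
with every observable `A`; the effects `G (i,j) = A j ∘ Φ i` form a joint observable. -/
theorem nondisturbing_implies_compatible_with_all
    {V : Type*} [AddCommGroup V] [Module ℝ V] [FiniteDimensional ℝ V]
    (S : Set V) (hSne : S.Nonempty) (hScvx : Convex ℝ S)
    (u : V →ₗ[ℝ] ℝ) (hu : ∀ s ∈ S, u s = 1)
    {k l : ℕ}
    (T : Fin k → (V →ₗ[ℝ] ℝ)) (hT : IsObservable S u T)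
    (Φ : Fin k → (V →ₗ[ℝ] V)) (hΦop : ∀ i, IsOperation S u (Φ i))
    (hΦsum : ∑ i, Φ i = LinearMap.id)
    (hΦT : ∀ i, u.comp (Φ i) = T i)
    (A : Fin l → (V →ₗ[ℝ] ℝ)) (hA : IsObservable S u A) :
    IsObservable S u (fun q : Fin k × Fin l => (A q.2).comp (Φ q.1)) ∧
    (∀ i, ∑ j, (A j).comp (Φ i) = T i) ∧
    (∀ j, ∑ i, (A j).comp (Φ i) = A j) ∧
    Compatible S u T A := by
  -- Marginal over j: ∑ j, A j ∘ Φ i = u ∘ Φ i = T i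
  have hmargT : ∀ i, ∑ j, (A j).comp (Φ i) = T i := by
    intro i
    rw [← hΦT i, ← hA.2]
    ext x
    simp [LinearMap.sum_apply]
  -- Marginal over i: ∑ i, A j ∘ Φ i = A j
  have hmargA : ∀ j, ∑ i, (A j).comp (Φ i) = A j := by
    intro j
    have : ∑ i, (A j).comp (Φ i) = (A j).comp (∑ i, Φ i) := by
      ext x; simp [LinearMap.sum_apply]
    rw [this, hΦsum]; ext x; simp
  -- Each G (i,j) is an effect
  have heff : ∀ q : Fin k × Fin l, IsEffect S ((A q.2).comp (Φ q.1)) := by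
    rintro ⟨i, j⟩ s hs
    obtain ⟨⟨c, hc0, t, ht, hΦs⟩, hu1⟩ := hΦop i s hs
    have hcval : u (Φ i s) = c := by rw [hΦs]; simp [hu t ht]
    have hAjt0 := (hA.1 j t ht).1
    have hAjt1 := (hA.1 j t ht).2
    constructor
    · simp only [LinearMap.comp_apply, hΦs, map_smul, smul_eq_mul]
      positivity
    · simp only [LinearMap.comp_apply, hΦs, map_smul, smul_eq_mul]
      calc c * A j t ≤ c * 1 := by nlinarith
        _ ≤ 1 := by rw [hcval] at hu1; linarith
  have hobs : IsObservable S u (fun q : Fin k × Fin l => (A q.2).comp (Φ q.1)) := by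
    refine ⟨heff, ?_⟩
    rw [Fintype.sum_prod_type]
    simp only [hmargT]
    exact hT.2
  exact ⟨hobs, hmargT, hmargA, ⟨_, hobs, hmargT, hmargA⟩⟩
end

section
/- Let 0 < λ ≤ 1 and 0 ≤ μ ≤ 1. An effect f belongs to T̃_2 if and only if λf + (1−λ)μu belongs to T̃_2. In other words, the set of non-disturbing effects is invariant under adding and removing trivial noise. -/
/-- The non-disturbance condition on an effect `f` (membership in `T̃₂`): there exist
affinely independent extreme points `x₁,…,x_d` of `S` with `S ⊆ aff{x₁,…,x_d}` such
that for every extreme point `y = ∑ⱼ αⱼ xⱼ` of `S`, `αⱼ (f(xⱼ) − f(y)) = 0` for all `j`. -/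
def InT2 {V : Type*} [NormedAddCommGroup V] [NormedSpace ℝ V]
    (S : Set V) (f : V →ₗ[ℝ] ℝ) : Prop :=
  ∃ (d : ℕ) (x : Fin d → V),
    (∀ j, x j ∈ Set.extremePoints ℝ S) ∧
    AffineIndependent ℝ x ∧
    S ⊆ affineSpan ℝ (Set.range x) ∧
    ∀ y ∈ Set.extremePoints ℝ S, ∀ α : Fin d → ℝ,
      (∑ j, α j = 1 ∧ y = ∑ j, α j • x j) →
      ∀ j, α j * (f (x j) - f y) = 0

/-- Prop. 4: for `0 < λ ≤ 1` and `0 ≤ μ ≤ 1`, an effect `f` belongs to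
`T̃₂` iff the noisy effect `λ f + (1−λ) μ u` belongs to `T̃₂`. -/
theorem T2_noise_invariant
    {V : Type*} [NormedAddCommGroup V] [NormedSpace ℝ V] [FiniteDimensional ℝ V]
    (S : Set V) (hSne : S.Nonempty) (hScvx : Convex ℝ S) (hScpt : IsCompact S)
    (u : V →ₗ[ℝ] ℝ) (hu : ∀ s ∈ S, u s = 1)
    (f : V →ₗ[ℝ] ℝ) (hf : IsEffect S f)
    (lam mu : ℝ) (hlam0 : 0 < lam) (hlam1 : lam ≤ 1) (hmu0 : 0 ≤ mu) (hmu1 : mu ≤ 1) :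
    InT2 S f ↔ InT2 S (lam • f + ((1 - lam) * mu) • u) := by
  have key : ∀ (a b : V), a ∈ S → b ∈ S →
      (lam • f + ((1 - lam) * mu) • u) a - (lam • f + ((1 - lam) * mu) • u) b
        = lam * (f a - f b) := by
    intro a b ha hb
    simp [hu a ha, hu b hb]
    ring
  constructor
  · rintro ⟨d, x, hx, hai, hsp, hnd⟩
    refine ⟨d, x, hx, hai, hsp, ?_⟩
    intro y hy α hα j
    rw [key (x j) y (hx j).1 hy.1]
    have := hnd y hy α hα j
    ring_nf
    ring_nf at this
    nlinarith [this]
  · rintro ⟨d, x, hx, hai, hsp, hnd⟩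
    refine ⟨d, x, hx, hai, hsp, ?_⟩
    intro y hy α hα j
    have := hnd y hy α hα j
    rw [key (x j) y (hx j).1 hy.1, mul_comm lam, ← mul_assoc] at this
    rcases mul_eq_zero.mp this with h | h
    · exact h
    · exact absurd h hlam0.ne'
end

section
/- An effect f on a state space S belongs to T̃_2 (satisfies the non-disturbance condition) if and only if S decomposes as a direct sum S = ⊕_{k=1}^N S_k of state spaces and f is constant on each summand S_k. -/
/-- `S` decomposes as the direct sum of the state spaces `Sk 0 ⊕ ⋯ ⊕ Sk (N-1)`:
each summand is a nonempty closed convex subset of `S`, and every state `x ∈ S` has a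
unique decomposition `x = ∑ₖ vₖ` with each `vₖ` a nonnegative multiple of a state of
`Sk k` (equivalently, `x = ∑ₖ λₖ • xₖ` with unique weighted components `λₖ • xₖ`). -/
def IsDirectSumDecomp {V : Type*} [NormedAddCommGroup V] [NormedSpace ℝ V]
    (S : Set V) {N : ℕ} (Sk : Fin N → Set V) : Prop :=
  (∀ k, (Sk k).Nonempty ∧ Convex ℝ (Sk k) ∧ IsClosed (Sk k) ∧ Sk k ⊆ S) ∧
  ∀ x ∈ S, ∃! v : Fin N → V,
    (∀ k, ∃ c : ℝ, 0 ≤ c ∧ ∃ s ∈ Sk k, v k = c • s) ∧ x = ∑ k, v k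


open Finset in
lemma T2aux.linIndep_of_affIndep {V : Type*} [AddCommGroup V] [Module ℝ V]
    (u : V →ₗ[ℝ] ℝ) {ι : Type*} {x : ι → V}
    (hx1 : ∀ i, u (x i) = 1) (h : AffineIndependent ℝ x) : LinearIndependent ℝ x := by
  rw [linearIndependent_iff']
  intro s g hg i hi
  have hsum : s.sum g = 0 := by
    have := congrArg u hg
    simpa [map_sum, map_smul, hx1, smul_eq_mul] using this
  exact affineIndependent_iff.1 h s g hsum hg i hi

lemma T2aux.affIndep_of_linIndep {V : Type*} [AddCommGroup V] [Module ℝ V]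
    {ι : Type*} {x : ι → V} (h : LinearIndependent ℝ x) : AffineIndependent ℝ x := by
  rw [affineIndependent_iff]
  intro s w hw hws i hi
  exact linearIndependent_iff'.1 h s w hws i hi

lemma T2aux.exists_coords {V : Type*} [AddCommGroup V] [Module ℝ V]
    {d : ℕ} {x : Fin d → V} {y : V} (hy : y ∈ affineSpan ℝ (Set.range x)) :
    ∃ α : Fin d → ℝ, (∑ j, α j) = 1 ∧ y = ∑ j, α j • x j := by
  obtain ⟨w, hw, hwy⟩ := eq_affineCombination_of_mem_affineSpan_of_fintype hy
  exact ⟨w, hw, by rw [hwy, Finset.affineCombination_eq_linear_combination _ _ _ hw]⟩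

lemma T2aux.sum_mem_affineSpan {V : Type*} [AddCommGroup V] [Module ℝ V]
    {ι : Type*} [Fintype ι] {x : ι → V} {w : ι → ℝ} (hw : ∑ i, w i = 1) :
    (∑ i, w i • x i) ∈ affineSpan ℝ (Set.range x) := by
  rw [← Finset.affineCombination_eq_linear_combination Finset.univ x w hw]
  exact affineCombination_mem_affineSpan hw x

lemma T2aux.exists_extreme_affine_basis {V : Type*} [NormedAddCommGroup V] [NormedSpace ℝ V]
    [FiniteDimensional ℝ V] {T : Set V} (hcpt : IsCompact T) (hcvx : Convex ℝ T) :
    ∃ (m : ℕ) (b : Fin m → V), (∀ i, b i ∈ Set.extremePoints ℝ T) ∧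
      AffineIndependent ℝ b ∧ T ⊆ affineSpan ℝ (Set.range b) := by
  classical
  set E := Set.extremePoints ℝ T with hE
  obtain ⟨t, htE, hspan, hind⟩ := exists_affineIndependent ℝ V E
  haveI : Finite ↥t := finite_of_fin_dim_affineIndependent ℝ hind
  haveI : Fintype ↥t := Fintype.ofFinite _
  refine ⟨Fintype.card ↥t, fun i => ((Fintype.equivFin ↥t).symm i : V), ?_, ?_, ?_⟩
  · exact fun i => htE ((Fintype.equivFin ↥t).symm i).2
  · exact hind.comp_embedding (Fintype.equivFin ↥t).symm.toEmbedding
  · have hrange : Set.range (fun i => (((Fintype.equivFin ↥t).symm i : ↥t) : V)) = t := by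
      rw [show (fun i => (((Fintype.equivFin ↥t).symm i : ↥t) : V)) = ((↑) : ↥t → V) ∘ (Fintype.equivFin ↥t).symm from rfl, Set.range_comp ((↑) : ↥t → V) (Fintype.equivFin ↥t).symm,
        Set.range_eq_univ.2 (Fintype.equivFin ↥t).symm.surjective, Set.image_univ,
        Subtype.range_coe]
    rw [hrange, hspan]
    have hTsub : T ⊆ closure (convexHull ℝ E) :=
      (closure_convexHull_extremePoints hcpt hcvx).symm.subset
    intro z hz
    have h1 : closure (convexHull ℝ E) ⊆ (affineSpan ℝ E : Set V) := by
      have : IsClosed ((affineSpan ℝ E : Set V)) :=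
        (affineSpan ℝ E).closed_of_finiteDimensional
      exact closure_minimal (convexHull_subset_affineSpan E) this
    exact h1 (hTsub hz)

theorem T2aux.forward
    {V : Type*} [NormedAddCommGroup V] [NormedSpace ℝ V] [FiniteDimensional ℝ V]
    (S : Set V) (hSne : S.Nonempty) (hScvx : Convex ℝ S) (hScpt : IsCompact S)
    (u : V →ₗ[ℝ] ℝ) (hu : ∀ s ∈ S, u s = 1)
    (f : V →ₗ[ℝ] ℝ) (h : InT2 S f) :
    ∃ (N : ℕ) (Sk : Fin N → Set V),
        IsDirectSumDecomp S Sk ∧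
        ∀ k, ∀ a ∈ Sk k, ∀ b ∈ Sk k, f a = f b := by
  classical
  obtain ⟨d, x, hxe, haff, hspan, hcond⟩ := h
  have hxS : ∀ j, x j ∈ S := fun j => (hxe j).1
  have hu1 : ∀ j, u (x j) = 1 := fun j => hu _ (hxS j)
  have hlin : LinearIndependent ℝ x := T2aux.linIndep_of_affIndep u hu1 haff
  set F : Finset ℝ := Finset.univ.image (fun j => f (x j)) with hF
  set N := F.card with hN
  set val : Fin N → ℝ := fun k => (F.orderIsoOfFin rfl k : ℝ) with hval
  have hval_inj : Function.Injective val := fun a b hab =>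
    (F.orderIsoOfFin rfl).injective (Subtype.ext hab)
  have hval_mem : ∀ k, val k ∈ F := fun k => (F.orderIsoOfFin rfl k).2
  have hval_surj : ∀ r ∈ F, ∃ k, val k = r := fun r hr =>
    ⟨(F.orderIsoOfFin rfl).symm ⟨r, hr⟩,
      congrArg Subtype.val ((F.orderIsoOfFin rfl).apply_symm_apply ⟨r, hr⟩)⟩
  set J : Fin N → Finset (Fin d) := fun k => Finset.univ.filter (fun j => f (x j) = val k)
    with hJ
  set W : Fin N → Submodule ℝ V :=
    fun k => Submodule.span ℝ (Set.range (fun i : (J k) => x i)) with hW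
  set Sk : Fin N → Set V := fun k => S ∩ (W k : Set V) with hSk
  have hxW : ∀ k, ∀ j ∈ J k, x j ∈ W k := fun k j hj =>
    Submodule.subset_span ⟨⟨j, hj⟩, rfl⟩
  -- representation of elements of W k
  have hWrep : ∀ k, ∀ a ∈ W k,
      ∃ c : Fin d → ℝ, (∀ j, c j ≠ 0 → j ∈ J k) ∧ a = ∑ j, c j • x j := by
    intro k a ha
    rw [hW, Submodule.mem_span_range_iff_exists_fun] at ha
    obtain ⟨c, hc⟩ := ha
    set g : Fin d → ℝ := fun j => if h : j ∈ J k then c ⟨j, h⟩ else 0 with hg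
    have hg0 : ∀ j, j ∉ J k → g j = 0 := fun j hj => dif_neg hj
    have hgmem : ∀ i : (J k), g i = c i := fun i => dif_pos i.2
    refine ⟨g, fun j hj => ?_, ?_⟩
    · by_contra hjn; exact hj (hg0 j hjn)
    · rw [← hc]
      calc (∑ i : (J k), c i • x i) = ∑ j ∈ J k, g j • x j := by
            rw [← Finset.sum_coe_sort (J k) (fun j => g j • x j)]
            exact Fintype.sum_congr _ _ fun i => by rw [hgmem i]
        _ = ∑ j, g j • x j := Finset.sum_subset (Finset.subset_univ _)
            (fun j _ hj => by rw [hg0 j hj, zero_smul])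
  have hWof : ∀ k (c : Fin d → ℝ), (∀ j, c j ≠ 0 → j ∈ J k) →
      (∑ j, c j • x j) ∈ W k := by
    intro k c hc
    have : (∑ j, c j • x j) = ∑ j ∈ J k, c j • x j := by
      refine (Finset.sum_subset (Finset.subset_univ _) fun j _ hj => ?_).symm
      have : c j = 0 := by by_contra hne; exact hj (hc j hne)
      rw [this, zero_smul]
    rw [this]
    exact Submodule.sum_mem _ fun j hj => Submodule.smul_mem _ _ (hxW k j hj)
  have hfSk : ∀ k, ∀ a, a ∈ S → a ∈ W k → f a = val k := by
    intro k a haS haW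
    obtain ⟨c, hcJ, rfl⟩ := hWrep k a haW
    have hua : (∑ j, c j) = 1 := by
      have h1 := hu _ haS
      rw [map_sum] at h1
      simp only [map_smul, smul_eq_mul, hu1, mul_one] at h1
      exact h1
    have : f (∑ j, c j • x j) = ∑ j, c j * val k := by
      rw [map_sum]
      refine Finset.sum_congr rfl fun j _ => ?_
      rw [map_smul, smul_eq_mul]
      rcases eq_or_ne (c j) 0 with hc0 | hc0
      · rw [hc0, zero_mul, zero_mul]
      · rw [(Finset.mem_filter.1 (hcJ j hc0)).2]
    rw [this, ← Finset.sum_mul, hua, one_mul]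
  have hext_block : ∀ y ∈ Set.extremePoints ℝ S, ∃ k, y ∈ S ∧ y ∈ W k := by
    intro y hy
    obtain ⟨α, hα1, hαy⟩ := T2aux.exists_coords (hspan hy.1)
    have hcond' : ∀ j, α j ≠ 0 → f (x j) = f y := by
      intro j hj
      have h2 := hcond y hy α ⟨hα1, hαy⟩ j
      rcases mul_eq_zero.1 h2 with h3 | h3
      · exact absurd h3 hj
      · linarith [sub_eq_zero.1 h3]
    obtain ⟨j₀, hj₀⟩ : ∃ j, α j ≠ 0 := by
      by_contra hcon; push_neg at hcon; simp [hcon] at hα1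
    have hfy : f y ∈ F := by
      rw [← hcond' j₀ hj₀]; exact Finset.mem_image_of_mem _ (Finset.mem_univ j₀)
    obtain ⟨k, hk⟩ := hval_surj _ hfy
    refine ⟨k, hy.1, ?_⟩
    rw [hαy]
    exact hWof k α fun j hj =>
      Finset.mem_filter.2 ⟨Finset.mem_univ j, by rw [hcond' j hj, hk]⟩
  have hSkcl : ∀ k, IsClosed (Sk k) := fun k =>
    hScpt.isClosed.inter (W k).closed_of_finiteDimensional
  have hSkcpt : ∀ k, IsCompact (Sk k) := fun k =>
    hScpt.of_isClosed_subset (hSkcl k) Set.inter_subset_left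
  have hSkcvx : ∀ k, Convex ℝ (Sk k) := fun k => hScvx.inter (W k).convex
  have hSkne : ∀ k, (Sk k).Nonempty := by
    intro k
    obtain ⟨j, -, hj⟩ := Finset.mem_image.1 (hval_mem k)
    exact ⟨x j, hxS j, hxW k j (Finset.mem_filter.2 ⟨Finset.mem_univ _, hj⟩)⟩
  choose pt hpt using hSkne
  -- the set of decomposable points
  set K : Set ((Fin N → ℝ) × (Fin N → V)) :=
    (Set.univ.pi fun _ => Set.Icc (0:ℝ) 1) ×ˢ (Set.univ.pi fun k => Sk k) with hK
  set φ : (Fin N → ℝ) × (Fin N → V) → V := fun p => ∑ k, p.1 k • p.2 k with hφ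
  have hφc : Continuous φ := continuous_finset_sum _ fun k _ =>
    ((continuous_apply k).comp continuous_fst).smul ((continuous_apply k).comp continuous_snd)
  have hKcpt : IsCompact K :=
    (isCompact_univ_pi fun _ => isCompact_Icc).prod (isCompact_univ_pi fun k => hSkcpt k)
  set D := φ '' K with hD
  have hDcl : IsClosed D := (hKcpt.image hφc).isClosed
  have hDcvx : Convex ℝ D := by
    rintro - ⟨⟨c, s⟩, ⟨hc, hs⟩, rfl⟩ - ⟨⟨c', s'⟩, ⟨hc', hs'⟩, rfl⟩ p q hp hq hpq
    have hcm : ∀ k, c k ∈ Set.Icc (0:ℝ) 1 := fun k => hc k (Set.mem_univ k)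
    have hcm' : ∀ k, c' k ∈ Set.Icc (0:ℝ) 1 := fun k => hc' k (Set.mem_univ k)
    have hsm : ∀ k, s k ∈ Sk k := fun k => hs k (Set.mem_univ k)
    have hsm' : ∀ k, s' k ∈ Sk k := fun k => hs' k (Set.mem_univ k)
    set c'' : Fin N → ℝ := fun k => p * c k + q * c' k with hc''
    have hc''nn : ∀ k, 0 ≤ c'' k := fun k =>
      add_nonneg (mul_nonneg hp (hcm k).1) (mul_nonneg hq (hcm' k).1)
    set s'' : Fin N → V := fun k =>
      if h : c'' k = 0 then pt k
      else (c'' k)⁻¹ • (p • (c k • s k) + q • (c' k • s' k)) with hs''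
    have hkey : ∀ k, c'' k • s'' k = p • (c k • s k) + q • (c' k • s' k) := by
      intro k
      by_cases h : c'' k = 0
      · have h0 : p * c k + q * c' k = 0 := h
        have hck := mul_nonneg hp (hcm k).1
        have hck' := mul_nonneg hq (hcm' k).1
        have h1 : p * c k = 0 := by linarith
        have h2 : q * c' k = 0 := by linarith
        simp only [hs'']
        rw [dif_pos h, h, zero_smul, smul_smul, smul_smul, h1, h2,
          zero_smul, zero_smul, add_zero]
      · simp only [hs'']
        rw [dif_neg h, smul_inv_smul₀ h]
    refine ⟨⟨c'', s''⟩, ⟨fun k _ => ?_, fun k _ => ?_⟩, ?_⟩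
    · have := (convex_Icc (0:ℝ) 1) (hcm k) (hcm' k) hp hq hpq
      simpa [smul_eq_mul] using this
    · show s'' k ∈ Sk k
      by_cases h : c'' k = 0
      · have he : s'' k = pt k := by rw [hs'']; exact dif_pos h
        rw [he]; exact hpt k
      · have he : s'' k = (c'' k)⁻¹ • (p • (c k • s k) + q • (c' k • s' k)) := by
          rw [hs'']; exact dif_neg h
        rw [he]
        have hpos : 0 < c'' k := lt_of_le_of_ne (hc''nn k) (Ne.symm h)
        have e1 : (c'' k)⁻¹ • (p • (c k • s k) + q • (c' k • s' k)) =
            ((c'' k)⁻¹ * (p * c k)) • s k + ((c'' k)⁻¹ * (q * c' k)) • s' k := by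
          rw [smul_add]; rw [smul_smul, smul_smul, smul_smul, smul_smul]
          ring_nf
        rw [e1]
        refine (hSkcvx k) (hsm k) (hsm' k)
          (mul_nonneg (inv_nonneg.2 (le_of_lt hpos)) (mul_nonneg hp (hcm k).1))
          (mul_nonneg (inv_nonneg.2 (le_of_lt hpos)) (mul_nonneg hq (hcm' k).1)) ?_
        have : (c'' k)⁻¹ * (p * c k) + (c'' k)⁻¹ * (q * c' k) = (c'' k)⁻¹ * c'' k := by
          rw [← mul_add]
        rw [this, inv_mul_cancel₀ h]
    · show ∑ k, c'' k • s'' k = p • φ (c, s) + q • φ (c', s')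
      rw [hφ]
      simp only [hkey]
      rw [Finset.sum_add_distrib, ← Finset.smul_sum, ← Finset.smul_sum]
  have hextD : Set.extremePoints ℝ S ⊆ D := by
    intro y hy
    obtain ⟨k₀, hyS, hyW⟩ := hext_block y hy
    refine ⟨⟨fun k => if k = k₀ then 1 else 0, fun k => if k = k₀ then y else pt k⟩,
      ⟨fun k _ => ?_, fun k _ => ?_⟩, ?_⟩
    · dsimp only; split <;> simp
    · dsimp only
      by_cases hk : k = k₀
      · rw [if_pos hk]; subst hk; exact ⟨hyS, hyW⟩
      · rw [if_neg hk]; exact hpt k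
    · show (∑ k, (if k = k₀ then (1:ℝ) else 0) • (if k = k₀ then y else pt k)) = y
      rw [Finset.sum_eq_single k₀]
      · simp
      · intro k _ hk; simp [hk]
      · intro hk; exact absurd (Finset.mem_univ k₀) hk
  have hSD : S ⊆ D := by
    have h1 : convexHull ℝ (Set.extremePoints ℝ S) ⊆ D := convexHull_min hextD hDcvx
    have h2 := closure_convexHull_extremePoints hScpt hScvx
    intro z hz
    rw [← h2] at hz
    exact (closure_minimal h1 hDcl) hz
  -- uniqueness of block decomposition
  have hdisj : ∀ {k k' : Fin N} {j}, j ∈ J k → j ∈ J k' → k = k' := by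
    intro k k' j h1 h2
    exact hval_inj (((Finset.mem_filter.1 h1).2.symm).trans (Finset.mem_filter.1 h2).2)
  have hWuniq : ∀ w w' : Fin N → V, (∀ k, w k ∈ W k) → (∀ k, w' k ∈ W k) →
      ∑ k, w k = ∑ k, w' k → w = w' := by
    intro w w' hw hw' hsum
    choose cw hcwJ hcw using fun k => hWrep k _ (hw k)
    choose cw' hcw'J hcw' using fun k => hWrep k _ (hw' k)
    set γ : Fin d → ℝ := fun j => ∑ k, cw k j with hγdef
    set γ' : Fin d → ℝ := fun j => ∑ k, cw' k j with hγ'def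
    have hγ : ∑ k, w k = ∑ j, γ j • x j := by
      calc ∑ k, w k = ∑ k, ∑ j, cw k j • x j := by
            exact Finset.sum_congr rfl fun k _ => hcw k
        _ = ∑ j, ∑ k, cw k j • x j := Finset.sum_comm
        _ = ∑ j, γ j • x j := by
            exact Finset.sum_congr rfl fun j _ => (Finset.sum_smul).symm
    have hγ' : ∑ k, w' k = ∑ j, γ' j • x j := by
      calc ∑ k, w' k = ∑ k, ∑ j, cw' k j • x j := by
            exact Finset.sum_congr rfl fun k _ => hcw' k
        _ = ∑ j, ∑ k, cw' k j • x j := Finset.sum_comm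
        _ = ∑ j, γ' j • x j := by
            exact Finset.sum_congr rfl fun j _ => (Finset.sum_smul).symm
    have hγγ' : γ = γ' := by
      have h0 : ∑ j, (γ j - γ' j) • x j = 0 := by
        simp only [sub_smul, Finset.sum_sub_distrib, ← hγ, ← hγ', hsum, sub_self]
      funext j
      have := Fintype.linearIndependent_iff.1 hlin (fun j => γ j - γ' j) h0 j
      linarith
    have key : ∀ (c : Fin N → Fin d → ℝ), (∀ k j, c k j ≠ 0 → j ∈ J k) →
        ∀ k j, c k j = if j ∈ J k then (∑ k', c k' j) else 0 := by
      intro c hc k j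
      by_cases hjk : j ∈ J k
      · rw [if_pos hjk]
        have hss := Finset.sum_eq_single (s := Finset.univ) (f := fun k' => c k' j) k
          (fun k' _ hk' => by
            by_contra hne; exact hk' (hdisj (hc k' j hne) hjk))
          (fun hk => absurd (Finset.mem_univ k) hk)
        rw [hss]
      · rw [if_neg hjk]
        by_contra hne; exact hjk (hc k j hne)
    funext k
    rw [hcw k, hcw' k]
    refine Finset.sum_congr rfl fun j _ => ?_
    rw [key cw hcwJ k j, key cw' hcw'J k j]
    show (if j ∈ J k then γ j else 0) • x j = (if j ∈ J k then γ' j else 0) • x j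
    rw [hγγ']
  -- assemble
  refine ⟨N, Sk, ⟨fun k => ⟨⟨pt k, hpt k⟩, hSkcvx k, hSkcl k, Set.inter_subset_left⟩, ?_⟩,
    fun k a ha b hb => by rw [hfSk k a ha.1 ha.2, hfSk k b hb.1 hb.2]⟩
  intro z hz
  obtain ⟨⟨c, s⟩, ⟨hc, hs⟩, hφz⟩ := hSD hz
  have hvW : ∀ (v : Fin N → V),
      (∀ k, ∃ cc : ℝ, 0 ≤ cc ∧ ∃ ss ∈ Sk k, v k = cc • ss) → ∀ k, v k ∈ W k := by
    intro v hv k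
    obtain ⟨cc, -, ss, hss, hvk⟩ := hv k
    rw [hvk]
    exact Submodule.smul_mem _ _ hss.2
  refine ⟨fun k => c k • s k,
    ⟨fun k => ⟨c k, (hc k (Set.mem_univ k)).1, s k, hs k (Set.mem_univ k), rfl⟩, hφz.symm⟩, ?_⟩
  rintro v' ⟨hv', hzv'⟩
  exact hWuniq v' (fun k => c k • s k) (hvW v' hv')
    (fun k => Submodule.smul_mem _ _ (hs k (Set.mem_univ k)).2)
    (by rw [← hzv']; exact hφz.symm)

set_option maxHeartbeats 1000000 in
theorem T2aux.backward
    {V : Type*} [NormedAddCommGroup V] [NormedSpace ℝ V] [FiniteDimensional ℝ V]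
    (S : Set V) (hSne : S.Nonempty) (hScvx : Convex ℝ S) (hScpt : IsCompact S)
    (u : V →ₗ[ℝ] ℝ) (hu : ∀ s ∈ S, u s = 1)
    (f : V →ₗ[ℝ] ℝ)
    (h : ∃ (N : ℕ) (Sk : Fin N → Set V), IsDirectSumDecomp S Sk ∧
        ∀ k, ∀ a ∈ Sk k, ∀ b ∈ Sk k, f a = f b) :
    InT2 S f := by
  classical
  obtain ⟨N, Sk, ⟨hprops, hdec⟩, hconst⟩ := h
  have hne : ∀ k, (Sk k).Nonempty := fun k => (hprops k).1
  have hcvx : ∀ k, Convex ℝ (Sk k) := fun k => (hprops k).2.1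
  have hcl : ∀ k, IsClosed (Sk k) := fun k => (hprops k).2.2.1
  have hsub : ∀ k, Sk k ⊆ S := fun k => (hprops k).2.2.2
  have hcpt : ∀ k, IsCompact (Sk k) := fun k => hScpt.of_isClosed_subset (hcl k) (hsub k)
  choose pt hpt using hne
  have hu1 : ∀ k, ∀ z ∈ Sk k, u z = 1 := fun k z hz => hu z (hsub k hz)
  -- the canonical decomposition of a point of a summand
  have hdelta : ∀ (k : Fin N) (z : V), z ∈ Sk k →
      ((∀ j, ∃ c : ℝ, 0 ≤ c ∧ ∃ s ∈ Sk j, (fun j => if j = k then z else 0) j = c • s) ∧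
        z = ∑ j, (fun j => if j = k then z else 0) j) := by
    intro k z hz
    constructor
    · intro j
      by_cases hj : j = k
      · exact ⟨1, zero_le_one, z, by rw [hj]; exact hz, by dsimp only; rw [if_pos hj, one_smul]⟩
      · exact ⟨0, le_refl 0, pt j, hpt j, by dsimp only; rw [if_neg hj, zero_smul]⟩
    · simp
  -- extreme points of summands are extreme points of S
  have hext : ∀ (k : Fin N), ∀ z ∈ Set.extremePoints ℝ (Sk k), z ∈ Set.extremePoints ℝ S := by
    intro k z hz
    refine ⟨hsub k hz.1, ?_⟩
    intro a haS b hbS hzseg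
    obtain ⟨p, q, hp, hq, hpq, hpqz⟩ := hzseg
    obtain ⟨va, ⟨hva, hsa⟩, -⟩ := hdec a haS
    obtain ⟨vb, ⟨hvb, hsb⟩, -⟩ := hdec b hbS
    have hzS : z ∈ S := hsub k hz.1
    obtain ⟨w, hw, hwuniq⟩ := hdec z hzS
    set vm : Fin N → V := fun j => p • va j + q • vb j with hvm
    have hvmP : (∀ j, ∃ c : ℝ, 0 ≤ c ∧ ∃ s ∈ Sk j, vm j = c • s) ∧ z = ∑ j, vm j := by
      constructor
      · intro j
        obtain ⟨ca, hca, sa, hsa', hva'⟩ := hva j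
        obtain ⟨cb, hcb, sb, hsb', hvb'⟩ := hvb j
        by_cases h0 : p * ca + q * cb = 0
        · have hpca := mul_nonneg hp.le hca
          have hqcb := mul_nonneg hq.le hcb
          have h1 : p * ca = 0 := by linarith
          have h2 : q * cb = 0 := by linarith
          refine ⟨0, le_refl 0, pt j, hpt j, ?_⟩
          show p • va j + q • vb j = (0:ℝ) • pt j
          rw [hva', hvb', smul_smul, smul_smul, h1, h2, zero_smul, zero_smul, zero_smul,
            add_zero]
        · have hnn : 0 ≤ p * ca + q * cb :=
            add_nonneg (mul_nonneg hp.le hca) (mul_nonneg hq.le hcb)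
          have hpos : 0 < p * ca + q * cb := lt_of_le_of_ne hnn (Ne.symm h0)
          refine ⟨p * ca + q * cb, hnn,
            (p * ca + q * cb)⁻¹ • (p • va j + q • vb j), ?_, ?_⟩
          · have e1 : (p * ca + q * cb)⁻¹ • (p • va j + q • vb j) =
                ((p*ca+q*cb)⁻¹ * (p * ca)) • sa + ((p*ca+q*cb)⁻¹ * (q * cb)) • sb := by
              rw [hva', hvb']
              module
            rw [e1]
            refine (hcvx j) hsa' hsb'
              (mul_nonneg (inv_nonneg.2 hnn) (mul_nonneg hp.le hca))
              (mul_nonneg (inv_nonneg.2 hnn) (mul_nonneg hq.le hcb)) ?_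
            rw [← mul_add, inv_mul_cancel₀ h0]
          · exact (smul_inv_smul₀ h0 _).symm
      · show z = ∑ j, (p • va j + q • vb j)
        rw [Finset.sum_add_distrib, ← Finset.smul_sum, ← Finset.smul_sum, ← hsa, ← hsb]
        exact hpqz.symm
    have hmδ : vm = fun j => if j = k then z else 0 := by
      rw [hwuniq vm hvmP, hwuniq _ (hdelta k z hz.1)]
    have hvm0 : ∀ j, j ≠ k → p • va j + q • vb j = 0 := by
      intro j hj
      have hc := congrFun hmδ j
      simp only [if_neg hj] at hc
      exact hc
    have key : ∀ (e : V) (ve : Fin N → V), e ∈ S →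
        (∀ j, ∃ c : ℝ, 0 ≤ c ∧ ∃ s ∈ Sk j, ve j = c • s) → (e = ∑ j, ve j) →
        (∀ j, j ≠ k → ve j = 0) → e ∈ Sk k := by
      intro e ve heS hve hsum h0
      obtain ⟨ce, hce, se, hse, hvek⟩ := hve k
      have he : e = ve k := by
        rw [hsum]
        exact Finset.sum_eq_single k (fun j _ hj => h0 j hj)
          (fun hk => absurd (Finset.mem_univ k) hk)
      have hue : u e = 1 := hu e heS
      have hc1 : ce = 1 := by
        have h2 : u e = ce := by
          rw [he, hvek, map_smul, smul_eq_mul, hu1 k se hse, mul_one]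
        rw [← h2, hue]
      rw [he, hvek, hc1, one_smul]; exact hse
    have hva0 : ∀ j, j ≠ k → va j = 0 := by
      intro j hj
      obtain ⟨ca, hca, sa, hsa', hva'⟩ := hva j
      obtain ⟨cb, hcb, sb, hsb', hvb'⟩ := hvb j
      have h0 : p • va j + q • vb j = 0 := hvm0 j hj
      have hu0 : p * ca + q * cb = 0 := by
        have h1 := congrArg u h0
        rw [map_add, map_smul, map_smul, hva', hvb', map_smul, map_smul,
          hu1 j sa hsa', hu1 j sb hsb'] at h1
        simpa [smul_eq_mul] using h1
      have hpca : p * ca = 0 := by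
        nlinarith [mul_nonneg hp.le hca, mul_nonneg hq.le hcb]
      have hca0 : ca = 0 := (mul_eq_zero.1 hpca).resolve_left hp.ne'
      rw [hva', hca0, zero_smul]
    have hvb0 : ∀ j, j ≠ k → vb j = 0 := by
      intro j hj
      obtain ⟨ca, hca, sa, hsa', hva'⟩ := hva j
      obtain ⟨cb, hcb, sb, hsb', hvb'⟩ := hvb j
      have h0 : p • va j + q • vb j = 0 := hvm0 j hj
      have hu0 : p * ca + q * cb = 0 := by
        have h1 := congrArg u h0
        rw [map_add, map_smul, map_smul, hva', hvb', map_smul, map_smul,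
          hu1 j sa hsa', hu1 j sb hsb'] at h1
        simpa [smul_eq_mul] using h1
      have hqcb : q * cb = 0 := by
        nlinarith [mul_nonneg hp.le hca, mul_nonneg hq.le hcb]
      have hcb0 : cb = 0 := (mul_eq_zero.1 hqcb).resolve_left hq.ne'
      rw [hvb', hcb0, zero_smul]
    have haSk : a ∈ Sk k := key a va haS hva hsa hva0
    have hbSk : b ∈ Sk k := key b vb hbS hvb hsb hvb0
    exact hz.2 haSk hbSk ⟨p, q, hp, hq, hpq, hpqz⟩
  -- every extreme point of S lies in some summand
  have hextSk : ∀ y ∈ Set.extremePoints ℝ S, ∃ k, y ∈ Sk k := by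
    intro y hy
    obtain ⟨v, ⟨hv, hsum⟩, -⟩ := hdec y hy.1
    choose c hc s hsmem hvs using hv
    have hcsum : ∑ k, c k = 1 := by
      have h1 := hu y hy.1
      rw [hsum, map_sum] at h1
      calc ∑ k, c k = ∑ k, u (v k) := by
            refine Finset.sum_congr rfl fun k _ => ?_
            rw [hvs k, map_smul, smul_eq_mul, hu1 k (s k) (hsmem k), mul_one]
        _ = 1 := h1
    obtain ⟨k, hk⟩ : ∃ k, c k ≠ 0 := by
      by_contra hcon; push_neg at hcon
      rw [Finset.sum_congr rfl (fun k _ => hcon k)] at hcsum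
      simp at hcsum
    have hck : 0 < c k := lt_of_le_of_ne (hc k) (Ne.symm hk)
    have herase : c k + ∑ j ∈ Finset.univ.erase k, c j = 1 := by
      rw [Finset.add_sum_erase _ _ (Finset.mem_univ k)]
      exact hcsum
    by_cases h1 : c k = 1
    · have hrest : ∑ j ∈ Finset.univ.erase k, c j = 0 := by linarith
      have hvall : ∀ j ∈ Finset.univ.erase k, v j = 0 := by
        intro j hj
        have hcj := (Finset.sum_eq_zero_iff_of_nonneg (fun j _ => hc j)).1 hrest j hj
        rw [hvs j, hcj, zero_smul]
      have hyv : y = v k := by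
        rw [hsum, ← Finset.add_sum_erase _ _ (Finset.mem_univ k),
          Finset.sum_eq_zero hvall, add_zero]
      refine ⟨k, ?_⟩
      rw [hyv, hvs k, h1, one_smul]
      exact hsmem k
    · have hck1 : c k < 1 := by
        have hrest : 0 ≤ ∑ j ∈ Finset.univ.erase k, c j :=
          Finset.sum_nonneg fun j _ => hc j
        rcases lt_or_eq_of_le (by linarith : c k ≤ 1) with h | h
        · exact h
        · exact absurd h h1
      set t : ℝ := 1 - c k with ht
      have htpos : 0 < t := by rw [ht]; linarith
      have hsumt : ∑ j ∈ Finset.univ.erase k, c j = t := by rw [ht]; linarith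
      set z : V := t⁻¹ • ∑ j ∈ Finset.univ.erase k, v j with hz
      have hzS : z ∈ S := by
        have hz2 : z = ∑ j ∈ Finset.univ.erase k, (t⁻¹ * c j) • s j := by
          rw [hz, Finset.smul_sum]
          refine Finset.sum_congr rfl fun j _ => ?_
          rw [hvs j, smul_smul]
        rw [hz2]
        refine hScvx.sum_mem (fun j _ => mul_nonneg (inv_nonneg.2 htpos.le) (hc j)) ?_
          (fun j _ => hsub j (hsmem j))
        rw [← Finset.mul_sum, hsumt, inv_mul_cancel₀ htpos.ne']
      have hyseg : y = c k • s k + t • z := by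
        rw [hz, smul_inv_smul₀ htpos.ne', hsum,
          ← Finset.add_sum_erase _ _ (Finset.mem_univ k), hvs k]
      have hfin := hy.2 (hsub k (hsmem k)) hzS
        ⟨c k, t, hck, htpos, by rw [ht]; ring, hyseg.symm⟩
      exact ⟨k, hfin ▸ hsmem k⟩
  -- independence of the summand spans
  have hblock : ∀ y : Fin N → V, (∀ k, y k ∈ Submodule.span ℝ (Sk k)) → ∑ k, y k = 0 →
      ∀ k, y k = 0 := by
    intro y hy hy0 k₀
    have hN : 0 < N := k₀.pos
    have hrep : ∀ k, ∃ (n : ℕ) (g : Fin n → ℝ) (z : Fin n → V),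
        0 < n ∧ (∀ i, z i ∈ Sk k) ∧ ∑ i, g i • z i = y k := by
      intro k
      obtain ⟨n, g, z, hgz⟩ := Submodule.mem_span_set'.1 (hy k)
      refine ⟨n + 1, Fin.cons 0 g, Fin.cons (pt k) (fun i => (z i : V)), Nat.succ_pos n,
        ?_, ?_⟩
      · intro i
        refine Fin.cases ?_ ?_ i
        · rw [Fin.cons_zero]; exact hpt k
        · intro i'; rw [Fin.cons_succ]; exact (z i').2
      · rw [Fin.sum_univ_succ]
        simp only [Fin.cons_zero, Fin.cons_succ, zero_smul, zero_add]
        exact hgz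
    choose n g z hn hzmem hgz using hrep
    set bary : Fin N → V := fun k => ∑ i, ((n k : ℝ))⁻¹ • z k i with hbary
    have hbarymem : ∀ k, bary k ∈ Sk k := by
      intro k
      refine (hcvx k).sum_mem (fun i _ => inv_nonneg.2 (Nat.cast_nonneg _)) ?_
        (fun i _ => hzmem k i)
      rw [Finset.sum_const, Finset.card_univ, Fintype.card_fin, nsmul_eq_mul,
        mul_inv_cancel₀ (Nat.cast_ne_zero.2 (hn k).ne')]
    set B : Fin N → ℝ := fun k => ∑ i, |g k i| with hB
    have hBnn : ∀ k, 0 ≤ B k := fun k => Finset.sum_nonneg fun i _ => abs_nonneg _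
    set r : Fin N → ℝ := fun k => ((N : ℝ) * (n k : ℝ))⁻¹ with hr
    have hrpos : ∀ k, 0 < r k := fun k =>
      inv_pos.2 (mul_pos (Nat.cast_pos.2 hN) (Nat.cast_pos.2 (hn k)))
    set ε : ℝ := Finset.univ.inf' (Finset.univ_nonempty_iff.mpr ⟨k₀⟩) (fun k => r k / (B k + 1))
      with hε
    have hεpos : 0 < ε := by
      rw [hε, Finset.lt_inf'_iff]
      exact fun k _ => div_pos (hrpos k) (by linarith [hBnn k])
    have hεle : ∀ k, ε ≤ r k / (B k + 1) := fun k => Finset.inf'_le _ (Finset.mem_univ k)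
    have hwnn : ∀ k i, 0 ≤ r k + ε * g k i := by
      intro k i
      have h1 : |g k i| ≤ B k :=
        Finset.single_le_sum (f := fun i => |g k i|) (fun i _ => abs_nonneg _)
          (Finset.mem_univ i)
      have h2 : ε * |g k i| ≤ ε * B k := mul_le_mul_of_nonneg_left h1 hεpos.le
      have h5 : ε * (B k + 1) ≤ r k := (le_div_iff₀ (by linarith [hBnn k])).1 (hεle k)
      have h6 : -(ε * g k i) ≤ ε * |g k i| := by
        rw [← mul_neg]
        exact mul_le_mul_of_nonneg_left (neg_le_abs _) hεpos.le
      nlinarith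
    set p : V := ∑ k, ((N:ℝ))⁻¹ • bary k with hp
    have hpS : p ∈ S := by
      refine hScvx.sum_mem (fun k _ => inv_nonneg.2 (Nat.cast_nonneg _)) ?_
        (fun k _ => hsub k (hbarymem k))
      rw [Finset.sum_const, Finset.card_univ, Fintype.card_fin, nsmul_eq_mul,
        mul_inv_cancel₀ (Nat.cast_ne_zero.2 hN.ne')]
    obtain ⟨w, hw, hwuniq⟩ := hdec p hpS
    set v1 : Fin N → V := fun k => ((N:ℝ))⁻¹ • bary k with hv1
    set v2 : Fin N → V := fun k => ((N:ℝ))⁻¹ • bary k + ε • y k with hv2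
    have hv1P : (∀ k, ∃ c : ℝ, 0 ≤ c ∧ ∃ s ∈ Sk k, v1 k = c • s) ∧ p = ∑ k, v1 k :=
      ⟨fun k => ⟨(N:ℝ)⁻¹, inv_nonneg.2 (Nat.cast_nonneg _), bary k, hbarymem k, rfl⟩, rfl⟩
    have hv2rep : ∀ k, v2 k = ∑ i, (r k + ε * g k i) • z k i := by
      intro k
      show ((N:ℝ))⁻¹ • bary k + ε • y k = _
      calc ((N:ℝ))⁻¹ • bary k + ε • y k
          = (∑ i, ((N:ℝ)⁻¹ * (n k:ℝ)⁻¹) • z k i) + ∑ i, (ε * g k i) • z k i := by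
            rw [hbary]
            dsimp only
            rw [Finset.smul_sum, ← hgz k, Finset.smul_sum]
            simp_rw [smul_smul]
        _ = ∑ i, (r k + ε * g k i) • z k i := by
            rw [← Finset.sum_add_distrib]
            refine Finset.sum_congr rfl fun i _ => ?_
            rw [← add_smul, hr]
            dsimp only
            rw [mul_inv]
    have hv2P : (∀ k, ∃ c : ℝ, 0 ≤ c ∧ ∃ s ∈ Sk k, v2 k = c • s) ∧ p = ∑ k, v2 k := by
      constructor
      · intro k
        set cc := ∑ i, (r k + ε * g k i) with hcc
        by_cases h0 : cc = 0
        · have hall : ∀ i, r k + ε * g k i = 0 := fun i =>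
            (Finset.sum_eq_zero_iff_of_nonneg (fun i _ => hwnn k i)).1 h0 i
              (Finset.mem_univ i)
          refine ⟨0, le_refl 0, pt k, hpt k, ?_⟩
          rw [hv2rep k, zero_smul]
          exact Finset.sum_eq_zero fun i _ => by rw [hall i, zero_smul]
        · have hccpos : 0 < cc :=
            lt_of_le_of_ne (Finset.sum_nonneg fun i _ => hwnn k i) (Ne.symm h0)
          refine ⟨cc, hccpos.le, cc⁻¹ • v2 k, ?_, (smul_inv_smul₀ h0 _).symm⟩
          rw [hv2rep k, Finset.smul_sum]
          simp_rw [smul_smul]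
          refine (hcvx k).sum_mem
            (fun i _ => mul_nonneg (inv_nonneg.2 hccpos.le) (hwnn k i)) ?_
            (fun i _ => hzmem k i)
          rw [← Finset.mul_sum, ← hcc, inv_mul_cancel₀ h0]
      · show p = ∑ k, (((N:ℝ))⁻¹ • bary k + ε • y k)
        rw [Finset.sum_add_distrib]
        have hz0 : ∑ k, ε • y k = 0 := by rw [← Finset.smul_sum, hy0, smul_zero]
        rw [hz0, add_zero]
    have h12 : v1 = v2 := by rw [hwuniq v1 hv1P, hwuniq v2 hv2P]
    have h3 := congrFun h12 k₀
    have h4 : ε • y k₀ = 0 := by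
      have h5 : ((N:ℝ))⁻¹ • bary k₀ = ((N:ℝ))⁻¹ • bary k₀ + ε • y k₀ := h3
      exact left_eq_add.1 h5
    exact (smul_eq_zero.1 h4).resolve_left hεpos.ne'
  -- affine bases of the summands consisting of extreme points
  choose m b hbe hbi hbs using fun k => T2aux.exists_extreme_affine_basis (hcpt k) (hcvx k)
  have hbSk : ∀ k i, b k i ∈ Sk k := fun k i => extremePoints_subset (hbe k i)
  set X : ((k : Fin N) × Fin (m k)) → V := fun q => b q.1 q.2 with hX
  have hXe : ∀ q, X q ∈ Set.extremePoints ℝ S := fun q => hext q.1 _ (hbe q.1 q.2)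
  have hXlin : LinearIndependent ℝ X := by
    rw [Fintype.linearIndependent_iff]
    intro g hg q
    set yk : Fin N → V := fun k => ∑ i, g ⟨k, i⟩ • b k i with hyk
    have hyspan : ∀ k, yk k ∈ Submodule.span ℝ (Sk k) := fun k =>
      Submodule.sum_mem _ fun i _ =>
        Submodule.smul_mem _ _ (Submodule.subset_span (hbSk k i))
    have hysum : ∑ k, yk k = 0 := by
      rw [← hg, ← Finset.univ_sigma_univ, Finset.sum_sigma]
    have h0 := hblock yk hyspan hysum q.1
    have hlink : LinearIndependent ℝ (b q.1) :=
      T2aux.linIndep_of_affIndep u (fun i => hu _ (hsub _ (hbSk q.1 i))) (hbi q.1)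
    exact Fintype.linearIndependent_iff.1 hlink (fun i => g ⟨q.1, i⟩) h0 q.2
  set d := Fintype.card ((k : Fin N) × Fin (m k)) with hd
  set e : Fin d ≃ ((k : Fin N) × Fin (m k)) := (Fintype.equivFin _).symm with he
  have hxel : LinearIndependent ℝ (X ∘ e) := hXlin.comp e e.injective
  refine ⟨d, X ∘ e, fun j => hXe (e j), T2aux.affIndep_of_linIndep hxel, ?_, ?_⟩
  · have hrange : Set.range (X ∘ e) = Set.range X := by
      rw [Set.range_comp, Set.range_eq_univ.2 e.surjective, Set.image_univ]
    rw [hrange]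
    intro z hz
    obtain ⟨v, ⟨hv, hsum⟩, -⟩ := hdec z hz
    choose c hc s hsmem hvs using hv
    have hcsum : ∑ k, c k = 1 := by
      have h1 := hu z hz
      rw [hsum, map_sum] at h1
      calc ∑ k, c k = ∑ k, u (v k) := by
            refine Finset.sum_congr rfl fun k _ => ?_
            rw [hvs k, map_smul, smul_eq_mul, hu1 k (s k) (hsmem k), mul_one]
        _ = 1 := h1
    choose β hβ1 hβ using fun k => T2aux.exists_coords (hbs k (hsmem k))
    have hzrep : z = ∑ q : (k : Fin N) × Fin (m k), (c q.1 * β q.1 q.2) • X q := by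
      rw [hsum, ← Finset.univ_sigma_univ, Finset.sum_sigma]
      refine Finset.sum_congr rfl fun k _ => ?_
      rw [hvs k, hβ k, Finset.smul_sum]
      refine Finset.sum_congr rfl fun i _ => ?_
      rw [smul_smul]
    have hwsum : ∑ q : (k : Fin N) × Fin (m k), (c q.1 * β q.1 q.2) = 1 := by
      rw [← Finset.univ_sigma_univ, Finset.sum_sigma]
      calc ∑ k, ∑ i, c k * β k i = ∑ k, c k := by
            refine Finset.sum_congr rfl fun k _ => ?_
            rw [← Finset.mul_sum, hβ1 k, mul_one]
        _ = 1 := hcsum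
    have := T2aux.sum_mem_affineSpan (x := X) hwsum
    rw [← hzrep] at this
    exact this
  · rintro y hy α ⟨hα1, hαy⟩ j
    obtain ⟨k₀, hyk₀⟩ := hextSk y hy
    obtain ⟨β, hβ1, hβy⟩ := T2aux.exists_coords (hbs k₀ hyk₀)
    set g : Fin d → ℝ := fun j' => ∑ i, if j' = e.symm ⟨k₀, i⟩ then β i else 0 with hg
    have hgy : y = ∑ j', g j' • (X ∘ e) j' := by
      calc y = ∑ i, β i • b k₀ i := hβy
        _ = ∑ i, β i • (X ∘ e) (e.symm ⟨k₀, i⟩) := by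
            refine Finset.sum_congr rfl fun i _ => ?_
            rw [Function.comp_apply, Equiv.apply_symm_apply]
        _ = ∑ i, ∑ j', (if j' = e.symm ⟨k₀, i⟩ then β i else 0) • (X ∘ e) j' := by
            refine Finset.sum_congr rfl fun i _ => ?_
            have hsw : ∀ j', ((if j' = e.symm ⟨k₀, i⟩ then β i else 0) • (X ∘ e) j') =
                (if j' = e.symm ⟨k₀, i⟩ then β i • (X ∘ e) j' else 0) := fun j' => by
              by_cases hj : j' = e.symm ⟨k₀, i⟩ <;> simp [hj]
            rw [Finset.sum_congr rfl fun j' _ => hsw j', Finset.sum_ite_eq' Finset.univ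
              (e.symm ⟨k₀, i⟩) (fun j' => β i • (X ∘ e) j')]
            simp
        _ = ∑ j', g j' • (X ∘ e) j' := by
            rw [Finset.sum_comm]
            refine Finset.sum_congr rfl fun j' _ => ?_
            rw [hg]
            dsimp only
            rw [Finset.sum_smul]
    have hαg : α = g := by
      have h0 : ∑ j', (α j' - g j') • (X ∘ e) j' = 0 := by
        simp only [sub_smul, Finset.sum_sub_distrib, ← hαy, ← hgy, sub_self]
      funext j'
      have := Fintype.linearIndependent_iff.1 hxel _ h0 j'
      linarith
    rcases eq_or_ne (α j) 0 with h0 | h0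
    · rw [h0, zero_mul]
    · have hgj : g j ≠ 0 := by rw [← hαg]; exact h0
      obtain ⟨i, hi⟩ : ∃ i, (if j = e.symm ⟨k₀, i⟩ then β i else 0) ≠ 0 := by
        by_contra hcon
        push_neg at hcon
        exact hgj (Finset.sum_eq_zero fun i _ => hcon i)
      have hji : j = e.symm ⟨k₀, i⟩ := by
        by_contra hne
        rw [if_neg hne] at hi
        exact hi rfl
      have hxj : (X ∘ e) j = b k₀ i := by
        rw [hji, Function.comp_apply, Equiv.apply_symm_apply]
      have hfeq : f ((X ∘ e) j) = f y := by
        rw [hxj]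
        exact hconst k₀ _ (hbSk k₀ i) _ hyk₀
      rw [hfeq, sub_self, mul_zero]

/-- Theorem 1: an effect `f` satisfies the non-disturbance condition
(`f ∈ T̃₂`) iff the state space decomposes as a direct sum `S = ⊕ₖ Sk` with `f`
constant on each summand `Sk`. -/
theorem T2_iff_directSum
    {V : Type*} [NormedAddCommGroup V] [NormedSpace ℝ V] [FiniteDimensional ℝ V]
    (S : Set V) (hSne : S.Nonempty) (hScvx : Convex ℝ S) (hScpt : IsCompact S)
    (u : V →ₗ[ℝ] ℝ) (hu : ∀ s ∈ S, u s = 1)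
    (f : V →ₗ[ℝ] ℝ) (hf : IsEffect S f) :
    InT2 S f ↔
      ∃ (N : ℕ) (Sk : Fin N → Set V),
        IsDirectSumDecomp S Sk ∧
        ∀ k, ∀ a ∈ Sk k, ∀ b ∈ Sk k, f a = f b :=
  ⟨T2aux.forward S hSne hScvx hScpt u hu f,
   T2aux.backward S hSne hScvx hScpt u hu f⟩
end

section
/- A two-dimensional state space S (so dim V = 3) decomposes as a nontrivial direct sum S = S_1 ⊕ S_2 if and only if S is a triangle (the simplex with three extreme points). -/
/-- `S` decomposes as the direct sum `S₁ ⊕ S₂`: both summands are nonempty closed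
convex subsets of `S` and every state has a unique weighted decomposition into
components from the cones generated by the summands. -/
def IsDirectSumDecomp₂ {V : Type*} [NormedAddCommGroup V] [NormedSpace ℝ V]
    (S S₁ S₂ : Set V) : Prop :=
  S₁.Nonempty ∧ S₂.Nonempty ∧ Convex ℝ S₁ ∧ Convex ℝ S₂ ∧
  IsClosed S₁ ∧ IsClosed S₂ ∧ S₁ ⊆ S ∧ S₂ ⊆ S ∧
  ∀ x ∈ S, ∃! v : V × V,
    (∃ c : ℝ, 0 ≤ c ∧ ∃ s ∈ S₁, v.1 = c • s) ∧
    (∃ c : ℝ, 0 ≤ c ∧ ∃ s ∈ S₂, v.2 = c • s) ∧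
    x = v.1 + v.2

open Set Module

section Aux
variable {V : Type*} [NormedAddCommGroup V] [NormedSpace ℝ V]

/-- membership in the cone generated by `S` -/
def InCone (S : Set V) (v : V) : Prop := ∃ c : ℝ, 0 ≤ c ∧ ∃ s ∈ S, v = c • s

theorem InCone.smul {S : Set V} {v : V} {r : ℝ} (hr : 0 ≤ r) (h : InCone S v) :
    InCone S (r • v) := by
  obtain ⟨c, hc, s, hs, rfl⟩ := h
  exact ⟨r * c, mul_nonneg hr hc, s, hs, smul_smul r c s⟩

theorem InCone.add {S : Set V} (hS : Convex ℝ S) {a b : V}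
    (ha : InCone S a) (hb : InCone S b) : InCone S (a + b) := by
  obtain ⟨c, hc, s, hs, rfl⟩ := ha
  obtain ⟨d, hd, t, ht, rfl⟩ := hb
  rcases eq_or_lt_of_le (add_nonneg hc hd) with h0 | hpos
  · have hc0 : c = 0 := by linarith [hc, hd]
    have hd0 : d = 0 := by linarith
    exact ⟨0, le_refl _, s, hs, by simp [hc0, hd0]⟩
  · refine ⟨c + d, le_of_lt hpos, (c / (c + d)) • s + (d / (c + d)) • t,
      hS hs ht (div_nonneg hc hpos.le) (div_nonneg hd hpos.le) (by field_simp), ?_⟩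
    rw [smul_add, smul_smul, smul_smul]
    rw [mul_div_cancel₀ _ (ne_of_gt hpos), mul_div_cancel₀ _ (ne_of_gt hpos)]

theorem InCone.mem_span {S : Set V} {v : V} (h : InCone S v) : v ∈ Submodule.span ℝ S := by
  obtain ⟨c, _, s, hs, rfl⟩ := h
  exact Submodule.smul_mem _ _ (Submodule.subset_span hs)

theorem exists_sub_of_mem_span {S : Set V} (hne : S.Nonempty) (hcvx : Convex ℝ S)
    {z : V} (hz : z ∈ Submodule.span ℝ S) :
    ∃ a b : V, InCone S a ∧ InCone S b ∧ z = a - b := by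
  obtain ⟨s₀, hs₀⟩ := hne
  have h0 : InCone S 0 := ⟨0, le_refl _, s₀, hs₀, (zero_smul ℝ s₀).symm⟩
  induction hz using Submodule.span_induction with
  | mem x hx => exact ⟨x, 0, ⟨1, zero_le_one, x, hx, (one_smul ℝ x).symm⟩, h0, (sub_zero x).symm⟩
  | zero => exact ⟨0, 0, h0, h0, (sub_zero 0).symm⟩
  | add x y hx hy ihx ihy =>
    obtain ⟨a, b, ha, hb, rfl⟩ := ihx
    obtain ⟨a', b', ha', hb', rfl⟩ := ihy
    exact ⟨a + a', b + b', ha.add hcvx ha', hb.add hcvx hb', by abel⟩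
  | smul r x hx ihx =>
    obtain ⟨a, b, ha, hb, rfl⟩ := ihx
    rcases le_or_gt 0 r with hr | hr
    · exact ⟨r • a, r • b, ha.smul hr, hb.smul hr, by rw [smul_sub]⟩
    · refine ⟨(-r) • b, (-r) • a, hb.smul (by linarith), ha.smul (by linarith), ?_⟩
      rw [smul_sub, neg_smul, neg_smul]
      abel

end Aux
section Aux2
variable {V : Type*} [NormedAddCommGroup V] [NormedSpace ℝ V]

theorem InCone.u_nonneg {S : Set V} (u : V →ₗ[ℝ] ℝ) (hu : ∀ s ∈ S, u s = 1)
    {v : V} (h : InCone S v) : 0 ≤ u v := by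
  obtain ⟨c, hc, s, hs, rfl⟩ := h
  simpa [hu s hs] using hc

theorem InCone.eq_zero {S : Set V} (u : V →ₗ[ℝ] ℝ) (hu : ∀ s ∈ S, u s = 1)
    {v : V} (h : InCone S v) (h0 : u v = 0) : v = 0 := by
  obtain ⟨c, hc, s, hs, rfl⟩ := h
  have : c = 0 := by simpa [hu s hs] using h0
  simp [this]

theorem span_inf_eq_bot {S S₁ S₂ : Set V} (hScvx : Convex ℝ S)
    (u : V →ₗ[ℝ] ℝ) (hu : ∀ s ∈ S, u s = 1)
    (hD : IsDirectSumDecomp₂ S S₁ S₂) :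
    Submodule.span ℝ S₁ ⊓ Submodule.span ℝ S₂ = ⊥ := by
  obtain ⟨hne₁, hne₂, hcvx₁, hcvx₂, _, _, hsub₁, hsub₂, hdec⟩ := hD
  have hu₁ : ∀ s ∈ S₁, u s = 1 := fun s hs => hu s (hsub₁ hs)
  have hu₂ : ∀ s ∈ S₂, u s = 1 := fun s hs => hu s (hsub₂ hs)
  rw [eq_bot_iff]
  rintro z ⟨hz₁, hz₂⟩
  simp only [Submodule.mem_bot]
  obtain ⟨a₁, b₁, ha₁, hb₁, hz₁'⟩ := exists_sub_of_mem_span hne₁ hcvx₁ hz₁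
  obtain ⟨a₂, b₂, ha₂, hb₂, hz₂'⟩ := exists_sub_of_mem_span hne₂ hcvx₂ hz₂
  have hy : a₁ + b₂ = b₁ + a₂ := by
    have : a₁ - b₁ = a₂ - b₂ := by rw [← hz₁', ← hz₂']
    linear_combination (norm := abel) this
  have hr : u (a₁ + b₂) = u a₁ + u b₂ := by simp
  have hr' : u (a₁ + b₂) = u b₁ + u a₂ := by rw [hy]; simp
  rcases eq_or_lt_of_le (add_nonneg (ha₁.u_nonneg u hu₁) (hb₂.u_nonneg u hu₂) :
      (0:ℝ) ≤ u a₁ + u b₂) with h0 | hpos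
  · -- total weight zero : everything is zero
    have ha₁0 : u a₁ = 0 := by
      linarith [ha₁.u_nonneg u hu₁, hb₂.u_nonneg u hu₂]
    have hb₁0 : u b₁ = 0 := by
      linarith [hb₁.u_nonneg u hu₁, ha₂.u_nonneg u hu₂, hr, hr']
    rw [hz₁', ha₁.eq_zero u hu₁ ha₁0, hb₁.eq_zero u hu₁ hb₁0, sub_zero]
  · -- total weight positive : use uniqueness at the state r⁻¹ • y
    set r : ℝ := u a₁ + u b₂ with hr_def
    have hrne : r ≠ 0 := ne_of_gt hpos
    have hxS : r⁻¹ • (a₁ + b₂) ∈ S := by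
      obtain ⟨c, hc, s, hs, hae⟩ := ha₁
      obtain ⟨d, hd, t, ht, hbe⟩ := hb₂
      have hcd : c + d = r := by
        rw [hr_def, hae, hbe]
        simp [hu₁ s hs, hu₂ t ht]
      have hrw : r⁻¹ • (a₁ + b₂) = (r⁻¹ * c) • s + (r⁻¹ * d) • t := by
        rw [hae, hbe, smul_add, smul_smul, smul_smul]
      rw [hrw]
      exact hScvx (hsub₁ hs) (hsub₂ ht)
        (mul_nonneg (inv_nonneg.2 hpos.le) hc) (mul_nonneg (inv_nonneg.2 hpos.le) hd)
        (by rw [← mul_add, hcd, inv_mul_cancel₀ hrne])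
    obtain ⟨v, _, hvuniq⟩ := hdec _ hxS
    have h1 : ((r⁻¹ • a₁, r⁻¹ • b₂) : V × V) = v :=
      hvuniq _ ⟨ha₁.smul (inv_nonneg.2 hpos.le), hb₂.smul (inv_nonneg.2 hpos.le),
        by rw [← smul_add]⟩
    have h2 : ((r⁻¹ • b₁, r⁻¹ • a₂) : V × V) = v :=
      hvuniq _ ⟨hb₁.smul (inv_nonneg.2 hpos.le), ha₂.smul (inv_nonneg.2 hpos.le),
        by rw [← smul_add, ← hy]⟩
    have heq : r⁻¹ • a₁ = r⁻¹ • b₁ := congrArg Prod.fst (h1.trans h2.symm)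
    have hab : a₁ = b₁ := by
      have := congrArg (fun w => r • w) heq
      simpa [smul_smul, mul_inv_cancel₀ hrne] using this
    rw [hz₁', hab, sub_self]

end Aux2
section Aux3
variable {V : Type*} [NormedAddCommGroup V] [NormedSpace ℝ V] [FiniteDimensional ℝ V]

theorem rank_one_eq_singleton {S₁ : Set V} (u : V →ₗ[ℝ] ℝ) (hu₁ : ∀ s ∈ S₁, u s = 1)
    {s₀ : V} (hs₀ : s₀ ∈ S₁) (h1 : finrank ℝ (Submodule.span ℝ S₁) = 1) :
    S₁ = {s₀} := by
  have hs₀ne : s₀ ≠ 0 := by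
    intro h; have := hu₁ s₀ hs₀; rw [h] at this; simp at this
  have hle : (ℝ ∙ s₀) ≤ Submodule.span ℝ S₁ :=
    (Submodule.span_singleton_le_iff_mem _ _).2 (Submodule.subset_span hs₀)
  have heq : (ℝ ∙ s₀) = Submodule.span ℝ S₁ :=
    Submodule.eq_of_le_of_finrank_le hle (by rw [h1, finrank_span_singleton hs₀ne])
  ext s
  simp only [Set.mem_singleton_iff]
  constructor
  · intro hs
    have : s ∈ (ℝ ∙ s₀) := heq ▸ Submodule.subset_span hs
    obtain ⟨a, ha⟩ := Submodule.mem_span_singleton.1 this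
    have : a = 1 := by
      have := congrArg u ha
      simpa [hu₁ s hs, hu₁ s₀ hs₀] using this
    rw [← ha, this, one_smul]
  · rintro rfl; exact hs₀

theorem rank_two_eq_segment {S₂ : Set V} (u : V →ₗ[ℝ] ℝ) (hu₂ : ∀ s ∈ S₂, u s = 1)
    (hcvx : Convex ℝ S₂) (hcpt : IsCompact S₂) (hne : S₂.Nonempty)
    (h2 : finrank ℝ (Submodule.span ℝ S₂) = 2) :
    ∃ x1 x2 : V, x1 ≠ x2 ∧ S₂ = segment ℝ x1 x2 := by
  classical
  set W := Submodule.span ℝ S₂ with hW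
  obtain ⟨s₀, hs₀⟩ := hne
  have hs₀W : s₀ ∈ W := Submodule.subset_span hs₀
  set L : W →ₗ[ℝ] ℝ := u.comp W.subtype with hL
  -- range of L is everything
  have hrange : finrank ℝ (LinearMap.range L) = 1 := by
    have hle : finrank ℝ (LinearMap.range L) ≤ 1 := by
      simpa using (LinearMap.range L).finrank_le
    have hmem : (1 : ℝ) ∈ LinearMap.range L := ⟨⟨s₀, hs₀W⟩, by simp [hL, hu₂ s₀ hs₀]⟩
    have hpos : 0 < finrank ℝ (LinearMap.range L) :=
      Module.finrank_pos_iff_exists_ne_zero.2 ⟨⟨1, hmem⟩, by simp⟩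
    omega
  have hker : finrank ℝ (LinearMap.ker L) = 1 := by
    have := LinearMap.finrank_range_add_finrank_ker L
    rw [hrange] at this
    have hWfin : finrank ℝ W = 2 := h2
    omega
  obtain ⟨k, hk0⟩ : ∃ k : LinearMap.ker L, k ≠ 0 :=
    Module.finrank_pos_iff_exists_ne_zero.1 (by rw [hker]; norm_num)
  set d : V := ((k : W) : V) with hd_def
  have hdW : (k : W) ∈ LinearMap.ker L := k.2
  have hd0 : d ≠ 0 := by
    simp only [hd_def]
    intro h
    apply hk0
    have : (k : W) = 0 := by
      apply Subtype.ext; exact h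
    exact Subtype.ext this
  have hdu : u d = 0 := hdW
  -- every direction inside W killed by u is a multiple of d
  have key : ∀ w ∈ W, u w = 0 → ∃ t : ℝ, w = t • d := by
    intro w hwW hw0
    have hkne : ((k : W) : W) ≠ 0 := by
      intro h; exact hk0 (Subtype.ext h)
    have hle : (ℝ ∙ (k : W)) ≤ LinearMap.ker L :=
      (Submodule.span_singleton_le_iff_mem _ _).2 hdW
    have heq : (ℝ ∙ (k : W)) = LinearMap.ker L :=
      Submodule.eq_of_le_of_finrank_le hle (by rw [hker, finrank_span_singleton hkne])
    have hmem : (⟨w, hwW⟩ : W) ∈ LinearMap.ker L := by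
      simp [hL, LinearMap.mem_ker, hw0]
    rw [← heq] at hmem
    obtain ⟨t, ht⟩ := Submodule.mem_span_singleton.1 hmem
    refine ⟨t, ?_⟩
    have := congrArg (fun z : W => (z : V)) ht
    simpa [hd_def] using this.symm
  -- a continuous functional with φ d = 1
  obtain ⟨g, -, hgd⟩ := exists_dual_vector ℝ d (norm_ne_zero_iff.2 hd0)
  set φ : V →L[ℝ] ℝ := ‖d‖⁻¹ • g with hφ
  have hφd : φ d = 1 := by
    simp [hφ, hgd, inv_mul_cancel₀ (norm_ne_zero_iff.2 hd0)]
  -- extreme points of φ on S₂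
  obtain ⟨x1, hx1S, hmin⟩ := hcpt.exists_isMinOn ⟨s₀, hs₀⟩ φ.continuous.continuousOn
  obtain ⟨x2, hx2S, hmax⟩ := hcpt.exists_isMaxOn ⟨s₀, hs₀⟩ φ.continuous.continuousOn
  have coord : ∀ w ∈ S₂, ∃ t : ℝ, w - s₀ = t • d ∧ φ w - φ s₀ = t := by
    intro w hw
    obtain ⟨t, ht⟩ := key (w - s₀) (Submodule.sub_mem _ (Submodule.subset_span hw) hs₀W)
      (by simp [hu₂ w hw, hu₂ s₀ hs₀])
    refine ⟨t, ht, ?_⟩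
    have := congrArg φ ht
    simpa [map_sub, hφd] using this
  obtain ⟨t₁, ht₁, hφ₁⟩ := coord x1 hx1S
  obtain ⟨t₂, ht₂, hφ₂⟩ := coord x2 hx2S
  have hseg : S₂ = segment ℝ x1 x2 := by
    apply Set.Subset.antisymm
    · intro w hw
      obtain ⟨tw, htw, hφw⟩ := coord w hw
      have h1w : t₁ ≤ tw := by
        have := hmin hw; simp only [Set.mem_setOf_eq] at this; linarith
      have hw2 : tw ≤ t₂ := by
        have := hmax hw; simp only [Set.mem_setOf_eq] at this; linarith
      rcases eq_or_lt_of_le (le_trans h1w hw2) with h12 | h12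
      · -- degenerate : w = x1
        have htw1 : tw = t₁ := le_antisymm (h12 ▸ hw2) h1w
        have hwx1 : w = x1 := by
          have hsub : w - x1 = (tw - t₁) • d := by rw [sub_smul, ← htw, ← ht₁]; abel
          rw [htw1, sub_self, zero_smul, sub_eq_zero] at hsub
          exact hsub
        rw [hwx1]; exact left_mem_segment ℝ x1 x2
      · have hwx1 : w - x1 = (tw - t₁) • d := by
          rw [sub_smul, ← htw, ← ht₁]; abel
        have hx21 : x2 - x1 = (t₂ - t₁) • d := by
          rw [sub_smul, ← ht₂, ← ht₁]; abel
        rw [segment_eq_image']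
        refine ⟨(tw - t₁) / (t₂ - t₁), ⟨div_nonneg (by linarith) (by linarith),
          (div_le_one (by linarith)).2 (by linarith)⟩, ?_⟩
        show x1 + ((tw - t₁) / (t₂ - t₁)) • (x2 - x1) = w
        rw [hx21, smul_smul, div_mul_cancel₀ _ (sub_ne_zero.2 h12.ne'), ← hwx1]
        abel
    · exact hcvx.segment_subset hx1S hx2S
  refine ⟨x1, x2, ?_, hseg⟩
  intro h
  rw [h, segment_same] at hseg
  have hx2ne : x2 ≠ 0 := by
    intro h0; have := hu₂ x2 hx2S; rw [h0] at this; simp at this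
  have hfin : finrank ℝ W = 1 := by
    rw [hW, hseg]
    exact finrank_span_singleton hx2ne
  omega
end Aux3
section Aux4
variable {V : Type*} [NormedAddCommGroup V] [NormedSpace ℝ V]

theorem IsDirectSumDecomp₂.symm {S S₁ S₂ : Set V} (h : IsDirectSumDecomp₂ S S₁ S₂) :
    IsDirectSumDecomp₂ S S₂ S₁ := by
  obtain ⟨h1, h2, h3, h4, h5, h6, h7, h8, h9⟩ := h
  refine ⟨h2, h1, h4, h3, h6, h5, h8, h7, fun x hx => ?_⟩
  obtain ⟨v, ⟨hv1, hv2, hv3⟩, hvu⟩ := h9 x hx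
  refine ⟨(v.2, v.1), ⟨hv2, hv1, by rw [hv3, add_comm]⟩, ?_⟩
  rintro w ⟨hw1, hw2, hw3⟩
  have heq := hvu (w.2, w.1) ⟨hw2, hw1, by rw [hw3, add_comm]⟩
  exact Prod.ext (congrArg Prod.snd heq) (congrArg Prod.fst heq)

theorem mem_convexHull_fin {n : ℕ} (x : Fin n → V) {y : V}
    (hy : y ∈ convexHull ℝ (Set.range x)) :
    ∃ w : Fin n → ℝ, (∀ i, 0 ≤ w i) ∧ ∑ i, w i = 1 ∧ y = ∑ i, w i • x i := by
  classical
  rw [convexHull_range_eq_exists_affineCombination] at hy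
  obtain ⟨t, w, hw0, hw1, hy⟩ := hy
  refine ⟨fun i => if i ∈ t then w i else 0, fun i => ?_, ?_, ?_⟩
  · dsimp only; split
    · exact hw0 _ ‹_›
    · exact le_refl 0
  · rw [Finset.sum_ite_mem, Finset.univ_inter]; exact hw1
  · rw [← hy, Finset.affineCombination_eq_linear_combination t x w hw1]
    simp only [ite_smul, zero_smul]
    rw [Finset.sum_ite_mem, Finset.univ_inter]

variable [FiniteDimensional ℝ V]

theorem decomp_triangle {S S₁ S₂ : Set V}
    (hScvx : Convex ℝ S) (hScpt : IsCompact S)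
    (u : V →ₗ[ℝ] ℝ) (hu : ∀ s ∈ S, u s = 1)
    (hD : IsDirectSumDecomp₂ S S₁ S₂)
    (h1 : finrank ℝ (Submodule.span ℝ S₁) = 1)
    (h2 : finrank ℝ (Submodule.span ℝ S₂) = 2) :
    ∃ x : Fin 3 → V, AffineIndependent ℝ x ∧ S = convexHull ℝ (Set.range x) := by
  classical
  obtain ⟨hne₁, hne₂, hcvx₁, hcvx₂, hcl₁, hcl₂, hsub₁, hsub₂, hdec⟩ := id hD
  have hu₁ : ∀ s ∈ S₁, u s = 1 := fun s hs => hu s (hsub₁ hs)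
  have hu₂ : ∀ s ∈ S₂, u s = 1 := fun s hs => hu s (hsub₂ hs)
  obtain ⟨x0, hx0⟩ := hne₁
  have hS₁ : S₁ = {x0} := rank_one_eq_singleton u hu₁ hx0 h1
  have hcpt₂ : IsCompact S₂ := hScpt.of_isClosed_subset hcl₂ hsub₂
  obtain ⟨x1, x2, hx12, hS₂⟩ := rank_two_eq_segment u hu₂ hcvx₂ hcpt₂ hne₂ h2
  have hx1S₂ : x1 ∈ S₂ := hS₂ ▸ left_mem_segment ℝ x1 x2
  have hx2S₂ : x2 ∈ S₂ := hS₂ ▸ right_mem_segment ℝ x1 x2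
  have hinf := span_inf_eq_bot hScvx u hu hD
  have hx0ne : x0 ≠ 0 := by
    intro h; have := hu₁ x0 hx0; rw [h] at this; simp at this
  refine ⟨![x0, x1, x2], ?_, ?_⟩
  · -- affine independence
    rw [affineIndependent_iff]
    intro t w hw0 hws
    set W : Fin 3 → ℝ := fun i => if i ∈ t then w i else 0 with hWdef
    have hWsum : W 0 + W 1 + W 2 = 0 := by
      have : ∑ i, W i = 0 := by
        rw [hWdef, Finset.sum_ite_mem, Finset.univ_inter, hw0]
      rwa [Fin.sum_univ_three] at this
    have hWvec : W 0 • x0 + W 1 • x1 + W 2 • x2 = 0 := by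
      have : ∑ i, W i • ![x0, x1, x2] i = 0 := by
        rw [hWdef]
        simp only [ite_smul, zero_smul]
        rw [Finset.sum_ite_mem, Finset.univ_inter, hws]
      simpa [Fin.sum_univ_three] using this
    have hA : W 0 • x0 ∈ Submodule.span ℝ S₁ :=
      Submodule.smul_mem _ _ (Submodule.subset_span hx0)
    have hB : W 1 • x1 + W 2 • x2 ∈ Submodule.span ℝ S₂ :=
      Submodule.add_mem _ (Submodule.smul_mem _ _ (Submodule.subset_span hx1S₂))
        (Submodule.smul_mem _ _ (Submodule.subset_span hx2S₂))
    have hA2 : W 0 • x0 ∈ Submodule.span ℝ S₂ := by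
      have : W 0 • x0 = -(W 1 • x1 + W 2 • x2) := by
        rw [← add_eq_zero_iff_eq_neg]; rw [← hWvec]; abel
      rw [this]; exact Submodule.neg_mem _ hB
    have hA0 : W 0 • x0 = 0 := by
      have : W 0 • x0 ∈ Submodule.span ℝ S₁ ⊓ Submodule.span ℝ S₂ := ⟨hA, hA2⟩
      rwa [hinf, Submodule.mem_bot] at this
    have hW0 : W 0 = 0 := by
      rcases smul_eq_zero.1 hA0 with h | h
      · exact h
      · exact absurd h hx0ne
    have hW1 : W 1 = 0 := by
      have hB0 : W 1 • x1 + W 2 • x2 = 0 := by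
        have := hWvec; rw [hW0, zero_smul, zero_add] at this; exact this
      have h21 : W 2 = -W 1 := by rw [hW0] at hWsum; linarith
      have : W 1 • (x1 - x2) = 0 := by
        rw [smul_sub, sub_eq_zero]
        rw [h21] at hB0
        linear_combination (norm := module) hB0
      rcases smul_eq_zero.1 this with h | h
      · exact h
      · exact absurd (sub_eq_zero.1 h) hx12
    have hW2 : W 2 = 0 := by rw [hW0, hW1] at hWsum; linarith
    intro e he
    have hall : ∀ i, W i = 0 := by
      intro i; fin_cases i <;> assumption
    have := hall e
    simpa [hWdef, he] using this
  · -- S is the triangle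
    apply Set.Subset.antisymm
    · intro y hy
      obtain ⟨v, ⟨⟨c, hc, s, hs, hv1⟩, ⟨c', hc', s', hs', hv2⟩, hsum⟩, -⟩ := hdec y hy
      have hsx0 : s = x0 := by rw [hS₁] at hs; exact hs
      have hcc' : c + c' = 1 := by
        have h := hu y hy
        rw [hsum, hv1, hv2] at h
        simpa [hu₁ s hs, hu₂ s' hs'] using h
      have hx0mem : x0 ∈ convexHull ℝ (Set.range ![x0, x1, x2]) :=
        subset_convexHull ℝ _ ⟨0, by simp⟩
      have hsmem : s' ∈ convexHull ℝ (Set.range ![x0, x1, x2]) := by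
        have hseg : segment ℝ x1 x2 ⊆ convexHull ℝ (Set.range ![x0, x1, x2]) :=
          (convex_convexHull ℝ _).segment_subset
            (subset_convexHull ℝ _ ⟨1, by simp⟩) (subset_convexHull ℝ _ ⟨2, by simp⟩)
        exact hseg (hS₂ ▸ hs')
      rw [hsum, hv1, hv2, hsx0]
      exact (convex_convexHull ℝ _) hx0mem hsmem hc hc' hcc'
    · apply convexHull_min _ hScvx
      rintro y ⟨i, rfl⟩
      fin_cases i
      · exact hsub₁ hx0
      · exact hsub₂ hx1S₂
      · exact hsub₂ hx2S₂

end Aux4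

/-- Corollary 4: a two-dimensional state space `S` (a compact convex
base of a generating cone in a 3-dimensional space `V`) admits a nontrivial direct
sum decomposition `S = S₁ ⊕ S₂` iff `S` is a triangle, i.e. the convex hull of three
affinely independent extreme points. -/
theorem twoDim_directSum_iff_triangle
    {V : Type*} [NormedAddCommGroup V] [NormedSpace ℝ V] [FiniteDimensional ℝ V]
    (hdim : Module.finrank ℝ V = 3)
    (S : Set V) (hSne : S.Nonempty) (hScvx : Convex ℝ S) (hScpt : IsCompact S)
    (hSgen : Submodule.span ℝ S = ⊤)
    (u : V →ₗ[ℝ] ℝ) (hu : ∀ s ∈ S, u s = 1) :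
    (∃ S₁ S₂ : Set V, IsDirectSumDecomp₂ S S₁ S₂ ∧ S₁ ≠ S ∧ S₂ ≠ S) ↔
    (∃ x : Fin 3 → V, AffineIndependent ℝ x ∧ S = convexHull ℝ (Set.range x)) := by
  constructor
  · rintro ⟨S₁, S₂, hD, -, -⟩
    obtain ⟨hne₁, hne₂, hcvx₁, hcvx₂, hcl₁, hcl₂, hsub₁, hsub₂, hdec⟩ := id hD
    have hinf := span_inf_eq_bot hScvx u hu hD
    have hsup : Submodule.span ℝ S₁ ⊔ Submodule.span ℝ S₂ = ⊤ := by
      rw [← top_le_iff, ← hSgen, Submodule.span_le]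
      intro y hy
      obtain ⟨v, ⟨⟨c, hc, s, hs, hv1⟩, ⟨c', hc', s', hs', hv2⟩, hsum⟩, -⟩ := hdec y hy
      rw [hsum]
      refine Submodule.add_mem _ (Submodule.mem_sup_left ?_) (Submodule.mem_sup_right ?_)
      · rw [hv1]; exact Submodule.smul_mem _ _ (Submodule.subset_span hs)
      · rw [hv2]; exact Submodule.smul_mem _ _ (Submodule.subset_span hs')
    have h3 : finrank ℝ (Submodule.span ℝ S₁) + finrank ℝ (Submodule.span ℝ S₂) = 3 := by
      have h := Submodule.finrank_sup_add_finrank_inf_eq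
        (Submodule.span ℝ S₁) (Submodule.span ℝ S₂)
      rw [hinf, hsup, finrank_bot, finrank_top, hdim] at h
      omega
    have hge : ∀ T : Set V, T.Nonempty → T ⊆ S → 1 ≤ finrank ℝ (Submodule.span ℝ T) := by
      intro T hTne hTS
      obtain ⟨s, hsT⟩ := hTne
      have hs0 : s ≠ 0 := by
        intro h; have := hu s (hTS hsT); rw [h] at this; simp at this
      calc 1 = finrank ℝ (ℝ ∙ s) := (finrank_span_singleton hs0).symm
        _ ≤ _ := Submodule.finrank_mono
          ((Submodule.span_singleton_le_iff_mem _ _).2 (Submodule.subset_span hsT))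
    have hge₁ := hge S₁ hne₁ hsub₁
    have hge₂ := hge S₂ hne₂ hsub₂
    rcases (by omega :
        (finrank ℝ (Submodule.span ℝ S₁) = 1 ∧ finrank ℝ (Submodule.span ℝ S₂) = 2) ∨
        (finrank ℝ (Submodule.span ℝ S₁) = 2 ∧ finrank ℝ (Submodule.span ℝ S₂) = 1)) with
      ⟨ha, hb⟩ | ⟨ha, hb⟩
    · exact decomp_triangle hScvx hScpt u hu hD ha hb
    · exact decomp_triangle hScvx hScpt u hu hD.symm hb ha
  · rintro ⟨x, hai, hS⟩
    have hx0S : x 0 ∈ S := hS ▸ subset_convexHull ℝ _ ⟨0, rfl⟩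
    have hx1S : x 1 ∈ S := hS ▸ subset_convexHull ℝ _ ⟨1, rfl⟩
    have hsegS : segment ℝ (x 1) (x 2) ⊆ S := by
      rw [hS]
      exact (convex_convexHull ℝ _).segment_subset
        (subset_convexHull ℝ _ ⟨1, rfl⟩) (subset_convexHull ℝ _ ⟨2, rfl⟩)
    have hsingS : ({x 0} : Set V) ⊆ S := by
      intro y hy; rwa [Set.mem_singleton_iff.1 hy]
    have hsegcl : IsClosed (segment ℝ (x 1) (x 2)) := by
      have : IsCompact (segment ℝ (x 1) (x 2)) := by
        rw [segment_eq_image']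
        exact isCompact_Icc.image
          (continuous_const.add (continuous_id.smul continuous_const))
      exact this.isClosed
    refine ⟨{x 0}, segment ℝ (x 1) (x 2),
      ⟨⟨x 0, rfl⟩, ⟨x 1, left_mem_segment ℝ _ _⟩, convex_singleton _, convex_segment _ _,
        isClosed_singleton, hsegcl, hsingS, hsegS, ?_⟩, ?_, ?_⟩
    · -- the unique decomposition
      intro y hy
      obtain ⟨w, hw0, hw1, hwy⟩ := mem_convexHull_fin x (hS ▸ hy)
      have hwy' : y = w 0 • x 0 + w 1 • x 1 + w 2 • x 2 := by
        rw [hwy, Fin.sum_univ_three]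
      have hw1' : w 0 + w 1 + w 2 = 1 := by rwa [Fin.sum_univ_three] at hw1
      have hv2 : ∃ c : ℝ, 0 ≤ c ∧ ∃ s ∈ segment ℝ (x 1) (x 2),
          w 1 • x 1 + w 2 • x 2 = c • s := by
        rcases eq_or_lt_of_le (add_nonneg (hw0 1) (hw0 2)) with h0 | hpos
        · refine ⟨0, le_refl _, x 1, left_mem_segment ℝ _ _, ?_⟩
          have h1 : w 1 = 0 := by linarith [hw0 1, hw0 2]
          have h2 : w 2 = 0 := by linarith [hw0 1, hw0 2]
          simp [h1, h2]
        · refine ⟨w 1 + w 2, hpos.le,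
            (w 1 / (w 1 + w 2)) • x 1 + (w 2 / (w 1 + w 2)) • x 2,
            ⟨w 1 / (w 1 + w 2), w 2 / (w 1 + w 2), div_nonneg (hw0 1) hpos.le,
              div_nonneg (hw0 2) hpos.le, by field_simp, rfl⟩, ?_⟩
          rw [smul_add, smul_smul, smul_smul, mul_div_cancel₀ _ hpos.ne',
            mul_div_cancel₀ _ hpos.ne']
      refine ⟨(w 0 • x 0, w 1 • x 1 + w 2 • x 2),
        ⟨⟨w 0, hw0 0, x 0, rfl, rfl⟩, hv2, by rw [hwy', add_assoc]⟩, ?_⟩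
      rintro ⟨p, q⟩ ⟨⟨c, hc, s, hs, hp₀⟩, ⟨c', hc', s', hs', hq₀⟩, hyq₀⟩
      have hp : p = c • s := hp₀
      have hq : q = c' • s' := hq₀
      have hyq : y = p + q := hyq₀
      have hsx0 : s = x 0 := hs
      have hus' : u s' = 1 := hu s' (hsegS hs')
      have hcc' : c + c' = 1 := by
        have h := hu y hy
        rw [hyq, hp, hq, hsx0] at h
        simpa [hu _ hx0S, hus'] using h
      obtain ⟨a, b, ha, hb, hab, hs'e⟩ := hs'
      have hy2 : y = c • x 0 + (c' * a) • x 1 + (c' * b) • x 2 := by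
        rw [hyq, hp, hq, hsx0, ← hs'e, smul_add, smul_smul, smul_smul, add_assoc]
      have hBA : c • x 0 + (c' * a) • x 1 + (c' * b) • x 2
          = w 0 • x 0 + w 1 • x 1 + w 2 • x 2 := by rw [← hy2, hwy']
      have hcab : c' * a + c' * b = c' := by rw [← mul_add, hab, mul_one]
      have hWs : ∑ i, (![c - w 0, c' * a - w 1, c' * b - w 2]) i = 0 := by
        simp [Fin.sum_univ_three]
        linarith
      have hWv : ∑ i, (![c - w 0, c' * a - w 1, c' * b - w 2]) i • x i = 0 := by
        simp only [Fin.sum_univ_three, Matrix.cons_val_zero, Matrix.cons_val_one,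
          Matrix.head_cons, Matrix.cons_val_two, Matrix.tail_cons]
        linear_combination (norm := module) hBA
      have hc0 : c = w 0 := by
        have h0 := hai.eq_zero_of_sum_eq_zero hWs hWv 0 (Finset.mem_univ _)
        simp at h0
        linarith
      refine Prod.ext ?_ ?_
      · show p = w 0 • x 0
        rw [hp, hsx0, hc0]
      · show q = w 1 • x 1 + w 2 • x 2
        have hq' : q = y - p := by rw [hyq]; abel
        rw [hq', hp, hsx0, hc0, hwy']
        abel
    · -- {x 0} ≠ S
      intro h
      have hmem : x 1 ∈ ({x 0} : Set V) := h.symm ▸ hx1S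
      exact hai.injective.ne (show (1 : Fin 3) ≠ 0 by decide) (Set.mem_singleton_iff.1 hmem)
    · -- segment ≠ S
      intro h
      have hx0seg : x 0 ∈ segment ℝ (x 1) (x 2) := h.symm ▸ hx0S
      obtain ⟨a, b, ha, hb, hab, habe⟩ := hx0seg
      have hWs : ∑ i, (![(-1 : ℝ), a, b]) i = 0 := by
        simp [Fin.sum_univ_three]; linarith
      have hWv : ∑ i, (![(-1 : ℝ), a, b]) i • x i = 0 := by
        simp only [Fin.sum_univ_three, Matrix.cons_val_zero, Matrix.cons_val_one,
          Matrix.head_cons, Matrix.cons_val_two, Matrix.tail_cons]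
        linear_combination (norm := module) habe
      have h0 := hai.eq_zero_of_sum_eq_zero hWs hWv 0 (Finset.mem_univ _)
      norm_num at h0
end

section
/- If there exist two post-processing inequivalent dichotomic simulation irreducible observables E and F on S, then T_1 = T_2 = T_3: every observable compatible with all observables is trivial. -/
/-- A bundled observable on the state space `S` with unit effect `u`. -/
structure GObs {V : Type*} [AddCommGroup V] [Module ℝ V]
    (S : Set V) (u : V →ₗ[ℝ] ℝ) where
  n : ℕ
  eff : Fin n → (V →ₗ[ℝ] ℝ)
  effect : ∀ i, IsEffect S (eff i)
  sum_eq : ∑ i, eff i = u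

variable {V : Type*} [AddCommGroup V] [Module ℝ V] {S : Set V} {u : V →ₗ[ℝ] ℝ}

/-- `A` is a post-processing of `B` (`B → A`, i.e. `A ∈ simu(B)`). -/
def GObs.PostProc (B A : GObs S u) : Prop :=
  ∃ ν : Fin B.n → Fin A.n → ℝ,
    (∀ x y, 0 ≤ ν x y) ∧ (∀ x, ∑ y, ν x y = 1) ∧
    ∀ y, A.eff y = ∑ x, ν x y • B.eff x

/-- Post-processing equivalence of observables. -/
def GObs.PPEquiv (B B' : GObs S u) : Prop :=
  B.PostProc B' ∧ B'.PostProc B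

/-- `A` can be simulated from the set of observables `𝓑` by mixing post-processings. -/
def GObs.Simulable (𝓑 : Set (GObs S u)) (A : GObs S u) : Prop :=
  ∃ (m : ℕ) (p : Fin m → ℝ) (B : Fin m → GObs S u)
    (ν : (i : Fin m) → Fin (B i).n → Fin A.n → ℝ),
    (∀ i, 0 ≤ p i) ∧ ∑ i, p i = 1 ∧ (∀ i, B i ∈ 𝓑) ∧
    (∀ i x y, 0 ≤ ν i x y) ∧ (∀ i x, ∑ y, ν i x y = 1) ∧
    ∀ y, A.eff y = ∑ i, p i • ∑ x, ν i x y • (B i).eff x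

/-- `B` is simulation irreducible: whenever `B` can be simulated from a set `𝓑`,
some member of `𝓑` is post-processing equivalent to `B`. -/
def GObs.SimIrr (B : GObs S u) : Prop :=
  ∀ 𝓑 : Set (GObs S u), GObs.Simulable 𝓑 B → ∃ B' ∈ 𝓑, B.PPEquiv B'

/-- Two observables are compatible if both are post-processings of a common
(joint) observable. -/
def GObs.Compatible (A B : GObs S u) : Prop :=
  ∃ G : GObs S u, G.PostProc A ∧ G.PostProc B

/-- Membership in `T₃`: compatibility with every observable. -/
def GObs.InT3 (T : GObs S u) : Prop :=
  ∀ A : GObs S u, T.Compatible A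

/-- A trivial observable (`T₁`): all effects proportional to `u` via a probability
distribution. -/
def GObs.Trivial (T : GObs S u) : Prop :=
  ∃ p : Fin T.n → ℝ, (∀ x, 0 ≤ p x) ∧ ∑ x, p x = 1 ∧ ∀ x, T.eff x = p x • u

private lemma sum_two {n : ℕ} (h : n = 2) {W : Type*} [AddCommMonoid W] (f : Fin n → W) :
    ∑ i, f i = f (Fin.cast h.symm 0) + f (Fin.cast h.symm 1) := by
  subst h
  rw [Fin.sum_univ_two]
  rfl

private lemma sum_ind_smul {n m : ℕ} (h : n = m) (y : Fin m) (f : Fin n → (V →ₗ[ℝ] ℝ)) :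
    ∑ x : Fin n, (if x.val = y.val then (1:ℝ) else 0) • f x = f (Fin.cast h.symm y) := by
  subst h
  have hc : Fin.cast (rfl : n = n).symm y = y := rfl
  rw [hc]
  have : ∀ x : Fin n, ((if x.val = y.val then (1:ℝ) else 0) • f x)
      = if x = y then f x else 0 := by
    intro x
    by_cases hxy : x = y
    · simp [hxy]
    · simp [hxy, fun h => hxy (Fin.val_inj.mp h)]
      intro hv
      exact absurd (Fin.val_inj.mp hv) hxy
  simp_rw [this]
  simp

private lemma sum_ind_one {n m : ℕ} (h : n = m) (x : Fin n) :
    ∑ y : Fin m, (if x.val = y.val then (1:ℝ) else 0) = 1 := by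
  subst h
  have : ∀ y : Fin n, (if x.val = y.val then (1:ℝ) else 0) = if y = x then 1 else 0 := by
    intro y
    by_cases hxy : y = x
    · simp [hxy]
    · have : ¬ x.val = y.val := fun hv => hxy (Fin.val_inj.mp hv).symm
      simp [hxy, this]
  simp_rw [this]
  simp

private lemma sum_swap_smul {n m : ℕ} (ν : Fin n → Fin m → ℝ) (w : Fin m → ℝ)
    (e : Fin n → (V →ₗ[ℝ] ℝ)) :
    ∑ z, w z • ∑ x, ν x z • e x = ∑ x, (∑ z, ν x z * w z) • e x := by
  calc ∑ z, w z • ∑ x, ν x z • e x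
      = ∑ z, ∑ x, (ν x z * w z) • e x := by
        refine Finset.sum_congr rfl fun z _ => ?_
        rw [Finset.smul_sum]
        exact Finset.sum_congr rfl fun x _ => by rw [smul_smul, mul_comm]
    _ = ∑ x, ∑ z, (ν x z * w z) • e x := Finset.sum_comm
    _ = ∑ x, (∑ z, ν x z * w z) • e x :=
        Finset.sum_congr rfl fun x _ => (Finset.sum_smul).symm

theorem GObs.PostProc.trans {B C A : GObs S u} (h1 : B.PostProc C) (h2 : C.PostProc A) :
    B.PostProc A := by
  obtain ⟨ν, hν0, hν1, hνe⟩ := h1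
  obtain ⟨μ, hμ0, hμ1, hμe⟩ := h2
  refine ⟨fun x y => ∑ z, ν x z * μ z y,
    fun x y => Finset.sum_nonneg fun z _ => mul_nonneg (hν0 x z) (hμ0 z y),
    fun x => ?_, fun y => ?_⟩
  · rw [Finset.sum_comm]
    calc ∑ z, ∑ y, ν x z * μ z y = ∑ z, ν x z * ∑ y, μ z y :=
          Finset.sum_congr rfl fun z _ => (Finset.mul_sum _ _ _).symm
      _ = 1 := by simp only [hμ1, mul_one]; exact hν1 x
  · calc A.eff y = ∑ z, μ z y • ∑ x, ν x z • B.eff x := by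
          rw [hμe y]; exact Finset.sum_congr rfl fun z _ => by rw [hνe z]
      _ = ∑ x, (∑ z, ν x z * μ z y) • B.eff x := sum_swap_smul ν (fun z => μ z y) B.eff

theorem GObs.PPEquiv.symm {B C : GObs S u} (h : B.PPEquiv C) : C.PPEquiv B := ⟨h.2, h.1⟩

theorem GObs.PPEquiv.trans {B C D : GObs S u} (h1 : B.PPEquiv C) (h2 : C.PPEquiv D) :
    B.PPEquiv D := ⟨h1.1.trans h2.1, h2.2.trans h1.2⟩

theorem GObs.PostProc.simulable {B A : GObs S u} (h : B.PostProc A) :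
    GObs.Simulable {B} A := by
  obtain ⟨ν, h0, h1, he⟩ := h
  refine ⟨1, fun _ => 1, fun _ => B, fun _ => ν, fun _ => zero_le_one, by simp,
    fun _ => rfl, fun _ => h0, fun _ => h1, fun y => ?_⟩
  rw [Fin.sum_univ_one, one_smul]
  exact he y

theorem GObs.Simulable.postProc {𝓑 : Set (GObs S u)} {A C : GObs S u}
    (h : GObs.Simulable 𝓑 A) (h2 : A.PostProc C) : GObs.Simulable 𝓑 C := by
  obtain ⟨m, p, B, ν, hp0, hp1, hB, hν0, hν1, hνe⟩ := h
  obtain ⟨μ, hμ0, hμ1, hμe⟩ := h2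
  refine ⟨m, p, B, fun i x y => ∑ z, ν i x z * μ z y, hp0, hp1, hB,
    fun i x y => Finset.sum_nonneg fun z _ => mul_nonneg (hν0 i x z) (hμ0 z y),
    fun i x => ?_, fun y => ?_⟩
  · rw [Finset.sum_comm]
    calc ∑ z, ∑ y, ν i x z * μ z y = ∑ z, ν i x z * ∑ y, μ z y :=
          Finset.sum_congr rfl fun z _ => (Finset.mul_sum _ _ _).symm
      _ = 1 := by simp only [hμ1, mul_one]; exact hν1 i x
  · calc C.eff y = ∑ z, μ z y • A.eff z := hμe y
      _ = ∑ z, μ z y • ∑ i, p i • ∑ x, ν i x z • (B i).eff x := by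
          exact Finset.sum_congr rfl fun z _ => by rw [hνe z]
      _ = ∑ z, ∑ i, p i • (μ z y • ∑ x, ν i x z • (B i).eff x) := by
          refine Finset.sum_congr rfl fun z _ => ?_
          rw [Finset.smul_sum]
          exact Finset.sum_congr rfl fun i _ => smul_comm _ _ _
      _ = ∑ i, ∑ z, p i • (μ z y • ∑ x, ν i x z • (B i).eff x) := Finset.sum_comm
      _ = ∑ i, p i • ∑ z, μ z y • ∑ x, ν i x z • (B i).eff x :=
          Finset.sum_congr rfl fun i _ => (Finset.smul_sum).symm
      _ = ∑ i, p i • ∑ x, (∑ z, ν i x z * μ z y) • (B i).eff x :=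
          Finset.sum_congr rfl fun i _ => by
            rw [sum_swap_smul (ν i) (fun z => μ z y) (B i).eff]

private lemma isEffect_compl (hu : ∀ s ∈ S, u s = 1) {e : V →ₗ[ℝ] ℝ}
    (he : IsEffect S e) : IsEffect S (u - e) := by
  intro s hs
  obtain ⟨h0, h1⟩ := he s hs
  simp only [LinearMap.sub_apply, hu s hs]
  constructor <;> linarith

def mkDich (S : Set V) (u : V →ₗ[ℝ] ℝ) (e : V →ₗ[ℝ] ℝ)
    (he : IsEffect S e) (he' : IsEffect S (u - e)) : GObs S u where
  n := 2
  eff := ![e, u - e]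
  effect := by
    intro i
    fin_cases i
    · simpa using he
    · simpa using he'
  sum_eq := by simp [Fin.sum_univ_two]

@[simp] lemma mkDich_n (S : Set V) (u e : V →ₗ[ℝ] ℝ) (he he') :
    (mkDich S u e he he').n = 2 := rfl

lemma mkDich_eff_zero (S : Set V) (u e : V →ₗ[ℝ] ℝ) (he he') :
    (mkDich S u e he he').eff (0 : Fin 2) = e := rfl

lemma mkDich_eff_one (S : Set V) (u e : V →ₗ[ℝ] ℝ) (he he') :
    (mkDich S u e he he').eff (1 : Fin 2) = u - e := rfl

theorem mkDich_postProc {b a : V →ₗ[ℝ] ℝ} (hb hb' ha ha') (α β : ℝ)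
    (hα0 : 0 ≤ α) (hα1 : α ≤ 1) (hβ0 : 0 ≤ β) (hβ1 : β ≤ 1)
    (hrel : a = α • b + β • (u - b)) :
    (mkDich S u b hb hb').PostProc (mkDich S u a ha ha') := by
  refine ⟨![![α, 1 - α], ![β, 1 - β]], ?_, ?_, ?_⟩
  · intro x y
    fin_cases x <;> fin_cases y <;> simp <;> linarith
  · intro x
    show ∑ y : Fin 2, _ = 1
    fin_cases x <;> simp [Fin.sum_univ_two]
  · intro y
    show _ = ∑ x : Fin 2, _
    fin_cases y <;> simp [mkDich, Fin.sum_univ_two]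
    · exact hrel
    · rw [hrel]; module

theorem postProc_mkDich_const (B : GObs S u) {a : V →ₗ[ℝ] ℝ} (ha ha') (c : ℝ)
    (h0 : 0 ≤ c) (h1 : c ≤ 1) (hc : a = c • u) :
    B.PostProc (mkDich S u a ha ha') := by
  refine ⟨fun x => ![c, 1 - c], fun x y => by fin_cases y <;> simp <;> linarith,
    fun x => by show ∑ y : Fin 2, _ = 1; simp [Fin.sum_univ_two], fun y => ?_⟩
  fin_cases y <;> simp [mkDich]
  · calc a = c • u := hc
      _ = c • ∑ x, B.eff x := by rw [B.sum_eq]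
      _ = ∑ x, c • B.eff x := Finset.smul_sum
  · calc u - a = (1 - c) • u := by rw [hc]; module
      _ = (1 - c) • ∑ x, B.eff x := by rw [B.sum_eq]
      _ = ∑ x, (1 - c) • B.eff x := Finset.smul_sum

theorem simulable_half_mix (G T A : GObs S u) (hGn : G.n = A.n) (hTn : T.n = A.n)
    (h : ∀ y, A.eff y = (2:ℝ)⁻¹ • G.eff (Fin.cast hGn.symm y)
        + (2:ℝ)⁻¹ • T.eff (Fin.cast hTn.symm y)) :
    GObs.Simulable {G, T} A := by
  have hBn : ∀ i : Fin 2, (![G, T] i).n = A.n := by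
    intro i; fin_cases i
    · exact hGn
    · exact hTn
  refine ⟨2, ![(2:ℝ)⁻¹, (2:ℝ)⁻¹], ![G, T],
    fun i x y => if x.val = y.val then 1 else 0, ?_, ?_, ?_, ?_, ?_, ?_⟩
  · intro i; fin_cases i <;> norm_num
  · rw [Fin.sum_univ_two]; norm_num
  · intro i; fin_cases i <;> simp
  · intro i x y; dsimp only; split <;> norm_num
  · intro i x; exact sum_ind_one (hBn i) x
  · intro y
    rw [Fin.sum_univ_two]
    simp only [Matrix.cons_val_zero, Matrix.cons_val_one, Matrix.head_cons]
    show A.eff y = (2:ℝ)⁻¹ • ∑ x : Fin G.n, _ + (2:ℝ)⁻¹ • ∑ x : Fin T.n, _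
    rw [sum_ind_smul hGn y G.eff, sum_ind_smul hTn y T.eff]
    exact h y

theorem hat_spec (B : GObs S u) (hn : B.n = 2) :
    ∃ (e : V →ₗ[ℝ] ℝ) (he : IsEffect S e) (he' : IsEffect S (u - e)),
      B.PPEquiv (mkDich S u e he he') := by
  have hsum := B.sum_eq
  rw [sum_two hn B.eff] at hsum
  set e := B.eff (Fin.cast hn.symm 0) with hedef
  have h1 : B.eff (Fin.cast hn.symm 1) = u - e :=
    eq_sub_of_add_eq (by rw [add_comm]; exact hsum)
  have he : IsEffect S e := B.effect _
  have he' : IsEffect S (u - e) := h1 ▸ B.effect _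
  have heffval : ∀ y : Fin 2, (mkDich S u e he he').eff y = B.eff (Fin.cast hn.symm y) := by
    intro y
    fin_cases y
    · rfl
    · exact h1.symm
  refine ⟨e, he, he', ⟨?_, ?_⟩⟩
  · refine ⟨fun x y => if x.val = y.val then 1 else 0,
      fun x y => by dsimp only; split <;> norm_num, fun x => sum_ind_one hn x, fun y => ?_⟩
    dsimp only
    rw [sum_ind_smul hn y B.eff]
    exact heffval y
  · refine ⟨fun y x => if y.val = x.val then 1 else 0,
      fun y x => by dsimp only; split <;> norm_num, fun y => sum_ind_one hn.symm y, fun x => ?_⟩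
    show B.eff x =
      ∑ y : Fin 2, (if y.val = x.val then (1:ℝ) else 0) • (mkDich S u e he he').eff y
    rw [sum_ind_smul hn.symm x (mkDich S u e he he').eff,
      heffval (Fin.cast hn.symm.symm x)]
    rfl

private lemma postProc_from_mkDich {e : V →ₗ[ℝ] ℝ} {he : IsEffect S e}
    {he' : IsEffect S (u - e)} {A : GObs S u}
    (h : (mkDich S u e he he').PostProc A) :
    ∃ w : Fin 2 → Fin A.n → ℝ, (∀ x y, 0 ≤ w x y) ∧ (∀ x, ∑ y, w x y = 1) ∧
      ∀ y, A.eff y = w 0 y • e + w 1 y • (u - e) := by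
  obtain ⟨w, h0, h1, h2⟩ := h
  refine ⟨w, h0, h1, fun y => ?_⟩
  rw [h2 y]
  show (∑ x : Fin 2, w x y • (mkDich S u e he he').eff x) = _
  rw [Fin.sum_univ_two]
  rfl


private lemma postProc_between_mkDich {e f : V →ₗ[ℝ] ℝ} {he : IsEffect S e}
    {he' : IsEffect S (u - e)} {hf : IsEffect S f} {hf' : IsEffect S (u - f)}
    (h : (mkDich S u e he he').PostProc (mkDich S u f hf hf')) :
    ∃ w : Fin 2 → Fin 2 → ℝ, (∀ x y, 0 ≤ w x y) ∧ (∀ x, ∑ y, w x y = 1) ∧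
      f = w 0 0 • e + w 1 0 • (u - e) := by
  obtain ⟨w, h0, h1, h2⟩ := postProc_from_mkDich h
  refine ⟨w, h0, fun x => h1 x, ?_⟩
  have h3 := h2 (0 : Fin 2)
  rwa [show (mkDich S u f hf hf').eff (0 : Fin 2) = f from rfl] at h3


set_option maxHeartbeats 2000000 in
/-- Prop. 10: if there are two post-processing inequivalent dichotomic
simulation irreducible observables `E` and `F` on `S`, then `T₁ = T₂ = T₃`: every
observable compatible with all observables is trivial. -/
theorem two_dichotomic_simIrr_implies_noFreeInformation
    {V : Type*} [NormedAddCommGroup V] [NormedSpace ℝ V] [FiniteDimensional ℝ V]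
    (S : Set V) (hSne : S.Nonempty) (hScvx : Convex ℝ S) (hScpt : IsCompact S)
    (u : V →ₗ[ℝ] ℝ) (hu : ∀ s ∈ S, u s = 1)
    (E F : GObs S u) (hEn : E.n = 2) (hFn : F.n = 2)
    (hE : E.SimIrr) (hF : F.SimIrr) (hEF : ¬ E.PPEquiv F) :
    ∀ A : GObs S u, A.InT3 → A.Trivial := by
  intro T hT
  obtain ⟨s₀, hs₀⟩ := hSne
  have hus₀ : u s₀ = 1 := hu s₀ hs₀
  obtain ⟨e, he, he', hEE2⟩ := hat_spec E hEn
  obtain ⟨f, hfe, hfe', hFF2⟩ := hat_spec F hFn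
  have hEFnot2 : ¬ (mkDich S u e he he').PPEquiv (mkDich S u f hfe hfe') :=
    fun h => hEF (hEE2.trans (h.trans hFF2.symm))
  have hEirr2 : ∀ 𝓑 : Set (GObs S u), GObs.Simulable 𝓑 (mkDich S u e he he') →
      ∃ B' ∈ 𝓑, (mkDich S u e he he').PPEquiv B' := by
    intro 𝓑 hsim
    obtain ⟨B', hB', h⟩ := hE 𝓑 (hsim.postProc hEE2.2)
    exact ⟨B', hB', hEE2.symm.trans h⟩
  have hFirr2 : ∀ 𝓑 : Set (GObs S u), GObs.Simulable 𝓑 (mkDich S u f hfe hfe') →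
      ∃ B' ∈ 𝓑, (mkDich S u f hfe hfe').PPEquiv B' := by
    intro 𝓑 hsim
    obtain ⟨B', hB', h⟩ := hF 𝓑 (hsim.postProc hFF2.2)
    exact ⟨B', hB', hFF2.symm.trans h⟩
  have hEtriv : ∀ c : ℝ, e = c • u → False := by
    intro c hc
    have hcv : e s₀ = c := by rw [hc]; simp [hus₀]
    have hc0 : 0 ≤ c := hcv ▸ (he s₀ hs₀).1
    have hc1 : c ≤ 1 := hcv ▸ (he s₀ hs₀).2
    obtain ⟨B', hB', hPP⟩ := hEirr2 {mkDich S u f hfe hfe'}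
      (postProc_mkDich_const (mkDich S u f hfe hfe') he he' c hc0 hc1 hc).simulable
    rw [Set.mem_singleton_iff] at hB'
    exact hEFnot2 (hB' ▸ hPP)
  have pin : ∀ d q : ℝ, d ≠ 0 → d • e = q • u → False := by
    intro d q hd hdq
    refine hEtriv (d⁻¹ * q) ?_
    calc e = d⁻¹ • (d • e) := by rw [smul_smul, inv_mul_cancel₀ hd, one_smul]
      _ = (d⁻¹ * q) • u := by rw [hdq, smul_smul]
  have key : ∀ α β γ : ℝ, α • u + β • e + γ • f = 0 → β = 0 := by
    intro α β γ hcombo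
    by_contra hβ
    rcases eq_or_ne γ 0 with hγ | hγ
    · refine pin β (-α) hβ ?_
      calc β • e = (α • u + β • e + γ • f) - α • u - γ • f := by module
        _ = (-α) • u := by rw [hcombo, hγ]; module
    · have hf : f = (γ⁻¹ * (-α)) • u + (γ⁻¹ * (-β)) • e := by
        have h1 : γ • f = (-α) • u + (-β) • e := by
          calc γ • f = (α • u + β • e + γ • f) - α • u - β • e := by module
            _ = (-α) • u + (-β) • e := by rw [hcombo]; module
        calc f = γ⁻¹ • (γ • f) := by rw [smul_smul, inv_mul_cancel₀ hγ, one_smul]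
          _ = γ⁻¹ • ((-α) • u + (-β) • e) := by rw [h1]
          _ = (γ⁻¹ * (-α)) • u + (γ⁻¹ * (-β)) • e := by
              rw [smul_add, smul_smul, smul_smul]
      set a := γ⁻¹ * (-α) with hadef
      set b := γ⁻¹ * (-β) with hbdef
      have hfval : ∀ s ∈ S, f s = a + b * e s := by
        intro s hs
        rw [hf]
        simp [hu s hs]
      by_cases hdeg : ∀ s ∈ S, e s = e s₀
      · -- degenerate case : e is constant on S
        have hc0 : 0 ≤ e s₀ := (he s₀ hs₀).1
        have hc1 : e s₀ ≤ 1 := (he s₀ hs₀).2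
        have hg2eff : IsEffect S ((2:ℝ) • e - (e s₀) • u) := by
          intro s hs
          simp only [LinearMap.sub_apply, LinearMap.smul_apply, smul_eq_mul,
            hdeg s hs, hu s hs, mul_one]
          constructor <;> linarith
        have hg2eff' := isEffect_compl hu hg2eff
        have hcueff : IsEffect S ((e s₀) • u) := by
          intro s hs
          simp only [LinearMap.smul_apply, smul_eq_mul, hu s hs, mul_one]
          exact ⟨hc0, hc1⟩
        have hcueff' := isEffect_compl hu hcueff
        have hmix : GObs.Simulable
            {mkDich S u ((2:ℝ) • e - (e s₀) • u) hg2eff hg2eff',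
             mkDich S u ((e s₀) • u) hcueff hcueff'} (mkDich S u e he he') := by
          apply simulable_half_mix (mkDich S u ((2:ℝ) • e - (e s₀) • u) hg2eff hg2eff')
            (mkDich S u ((e s₀) • u) hcueff hcueff') (mkDich S u e he he') rfl rfl
          intro y
          fin_cases y
          · show e = (2:ℝ)⁻¹ • ((2:ℝ) • e - (e s₀) • u) + (2:ℝ)⁻¹ • ((e s₀) • u)
            module
          · show u - e = (2:ℝ)⁻¹ • (u - ((2:ℝ) • e - (e s₀) • u))
              + (2:ℝ)⁻¹ • (u - (e s₀) • u)
            module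
        obtain ⟨B', hB', hPP⟩ := hEirr2 _ hmix
        rw [Set.mem_insert_iff, Set.mem_singleton_iff] at hB'
        rcases hB' with hB' | hB'
        · subst hB'
          obtain ⟨w, hw0, hw1, hwe0⟩ := postProc_between_mkDich hPP.1
          have hw00 : w 0 0 ≤ 1 := by
            have hs : ∑ y : Fin 2, w 0 y = 1 := hw1 0
            rw [Fin.sum_univ_two] at hs
            have := hw0 0 1
            linarith
          have h10 := hw0 1 0
          refine pin (2 - w 0 0 + w 1 0) (w 1 0 + e s₀) (ne_of_gt (by linarith)) ?_
          calc (2 - w 0 0 + w 1 0) • e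
              = ((2:ℝ) • e - (e s₀) • u) - (w 0 0 • e + w 1 0 • (u - e))
                + (w 1 0 + e s₀) • u := by module
            _ = (w 1 0 + e s₀) • u := by rw [hwe0]; module
        · subst hB'
          obtain ⟨w, hw0, hw1, hwe0⟩ := postProc_between_mkDich hPP.2
          refine hEtriv (w 0 0 * e s₀ + w 1 0 * (1 - e s₀)) ?_
          calc e = w 0 0 • ((e s₀) • u) + w 1 0 • (u - (e s₀) • u) := hwe0
            _ = (w 0 0 * e s₀ + w 1 0 * (1 - e s₀)) • u := by module
      · -- non-degenerate case
        push_neg at hdeg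
        obtain ⟨t, ht, hts⟩ := hdeg
        have hecont : ContinuousOn e S :=
          (LinearMap.continuous_of_finiteDimensional e).continuousOn
        obtain ⟨s1, hs1, hmin⟩ := hScpt.exists_isMinOn ⟨s₀, hs₀⟩ hecont
        obtain ⟨s2, hs2, hmax⟩ := hScpt.exists_isMaxOn ⟨s₀, hs₀⟩ hecont
        have hmle : ∀ s ∈ S, e s1 ≤ e s := fun s hs => hmin hs
        have hMge : ∀ s ∈ S, e s ≤ e s2 := fun s hs => hmax hs
        have hmM : e s1 < e s2 := by
          rcases lt_or_ge (e s1) (e s2) with h | h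
          · exact h
          · exfalso
            refine hts ?_
            have h1 := hmle t ht; have h2 := hMge t ht
            have h3 := hmle s₀ hs₀; have h4 := hMge s₀ hs₀
            linarith
        have hMm : (0:ℝ) < e s2 - e s1 := sub_pos.mpr hmM
        set e1 := (e s2 - e s1)⁻¹ • (e - (e s1) • u) with he1def
        have he1 : IsEffect S e1 := by
          intro s hs
          have h1 := hmle s hs; have h2 := hMge s hs
          have hval : e1 s = (e s2 - e s1)⁻¹ * (e s - e s1) := by
            rw [he1def]
            simp [hu s hs]
          rw [hval]
          constructor
          · exact mul_nonneg (inv_nonneg.mpr hMm.le) (by linarith)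
          · calc (e s2 - e s1)⁻¹ * (e s - e s1) ≤ (e s2 - e s1)⁻¹ * (e s2 - e s1) :=
                mul_le_mul_of_nonneg_left (by linarith) (inv_nonneg.mpr hMm.le)
              _ = 1 := inv_mul_cancel₀ hMm.ne'
        have he1' := isEffect_compl hu he1
        have hkey : (e s2 - e s1) • e1 = e - (e s1) • u := by
          rw [he1def, smul_smul, mul_inv_cancel₀ hMm.ne', one_smul]
        have hed2 : e = (e s2 - e s1) • e1 + (e s1) • u := by rw [hkey]; abel
        have hed : e = (e s2) • e1 + (e s1) • (u - e1) := by
          calc e = (e s2 - e s1) • e1 + (e s1) • u := hed2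
            _ = (e s2) • e1 + (e s1) • (u - e1) := by module
        have h0m : 0 ≤ e s1 := (he s1 hs1).1
        have h1M : e s2 ≤ 1 := (he s2 hs2).2
        have hPP1 : (mkDich S u e1 he1 he1').PostProc (mkDich S u e he he') :=
          mkDich_postProc he1 he1' he he' (e s2) (e s1)
            (by linarith) h1M h0m (by linarith) hed
        have hfd : f = (a + b * e s2) • e1 + (a + b * e s1) • (u - e1) := by
          calc f = a • u + b • e := hf
            _ = a • u + b • ((e s2 - e s1) • e1 + (e s1) • u) :=
                congrArg (fun X => a • u + b • X) hed2
            _ = (a + b * e s2) • e1 + (a + b * e s1) • (u - e1) := by module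
        have hfs2 : f s2 = a + b * e s2 := hfval s2 hs2
        have hfs1 : f s1 = a + b * e s1 := hfval s1 hs1
        have hPP2 : (mkDich S u e1 he1 he1').PostProc (mkDich S u f hfe hfe') :=
          mkDich_postProc he1 he1' hfe hfe' (a + b * e s2) (a + b * e s1)
            (hfs2 ▸ (hfe s2 hs2).1) (hfs2 ▸ (hfe s2 hs2).2)
            (hfs1 ▸ (hfe s1 hs1).1) (hfs1 ▸ (hfe s1 hs1).2) hfd
        obtain ⟨B1, hB1, hPPE⟩ := hEirr2 _ hPP1.simulable
        obtain ⟨B2, hB2, hPPF⟩ := hFirr2 _ hPP2.simulable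
        rw [Set.mem_singleton_iff] at hB1 hB2
        subst hB1; subst hB2
        exact hEFnot2 (hPPE.trans hPPF.symm)
  -- final assembly
  obtain ⟨G1, hG1T, hG1E⟩ := hT E
  have hEPG1 : E.PostProc G1 := by
    obtain ⟨B', hB', h⟩ := hE {G1} hG1E.simulable
    rw [Set.mem_singleton_iff] at hB'
    exact hB' ▸ h.1
  have hET2 : (mkDich S u e he he').PostProc T := (hEE2.2.trans hEPG1).trans hG1T
  obtain ⟨G2, hG2T, hG2F⟩ := hT F
  have hFPG2 : F.PostProc G2 := by
    obtain ⟨B', hB', h⟩ := hF {G2} hG2F.simulable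
    rw [Set.mem_singleton_iff] at hB'
    exact hB' ▸ h.1
  have hFT2 : (mkDich S u f hfe hfe').PostProc T := (hFF2.2.trans hFPG2).trans hG2T
  obtain ⟨ν, hν0, hνr, hνe⟩ := postProc_from_mkDich hET2
  obtain ⟨μ, hμ0, hμr, hμe⟩ := postProc_from_mkDich hFT2
  have heffy : ∀ y, T.eff y = ν 1 y • u := by
    intro y
    have h1 := hνe y
    have h2 := hμe y
    have hcombo : (ν 1 y - μ 1 y) • u + (ν 0 y - ν 1 y) • e + (μ 1 y - μ 0 y) • f = 0 := by
      calc (ν 1 y - μ 1 y) • u + (ν 0 y - ν 1 y) • e + (μ 1 y - μ 0 y) • f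
          = (ν 0 y • e + ν 1 y • (u - e)) - (μ 0 y • f + μ 1 y • (u - f)) := by module
        _ = T.eff y - T.eff y := by rw [← h1, ← h2]
        _ = 0 := sub_self _
    have hβ0 : ν 0 y - ν 1 y = 0 := key _ _ _ hcombo
    have hνeq : ν 0 y = ν 1 y := by linarith
    calc T.eff y = ν 0 y • e + ν 1 y • (u - e) := h1
      _ = ν 1 y • e + ν 1 y • (u - e) := by rw [hνeq]
      _ = ν 1 y • u := by module
  refine ⟨fun y => ν 1 y, fun y => hν0 1 y, ?_, heffy⟩
  have hsum : ∑ y, (ν 1 y • u) = u := by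
    calc ∑ y, (ν 1 y • u) = ∑ y, T.eff y := Finset.sum_congr rfl fun y _ => (heffy y).symm
      _ = u := T.sum_eq
  have happ := DFunLike.congr_fun hsum s₀
  simp only [LinearMap.coe_sum, Finset.sum_apply, LinearMap.smul_apply, smul_eq_mul,
    hus₀, mul_one] at happ
  exact happ
end

section
/- Let x_{i,1} be the intersection point of the line segments L_i = conv{g_i, g_{i+m}} and L_{i+1} = conv{g_{i+1}, g_{i+m+1}} among the 2m+1 indecomposable extreme effects g_k of the odd polygon state space S_{2m+1} (indices mod 2m+1). Then x_{i,1} = λ_1 g_i + (1−λ_1) g_{i+m} with λ_1 = (3σ_n − 1)/(2σ_n) where n = 2m+1, σ_n = 1/(1+r_n), r_n = sec(π/n), and the distance of x_{i,1} from the centroid (0,0,σ_n) equals σ_n r_n sin(π/(2n)). -/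
open Real

noncomputable section

/-- `r_n = sec(π/n)`. -/
def rPoly (n : ℕ) : ℝ := 1 / Real.cos (π / n)

/-- `σ_n = 1/(1 + r_n)`. -/
def sigmaPoly (n : ℕ) : ℝ := 1 / (1 + rPoly n)

/-- The indecomposable extreme effects of the polygon state space `S_n`,
`g_k = σ_n (cos(2kπ/n), sin(2kπ/n), 1)ᵀ`, lying on the plane `z = σ_n` in `ℝ³`.
(Indices are taken modulo `n`, which is automatic by periodicity.) -/
def gEff (n k : ℕ) : ℝ × ℝ × ℝ :=
  (sigmaPoly n * Real.cos (2 * k * π / n),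
   sigmaPoly n * Real.sin (2 * k * π / n),
   sigmaPoly n)

/-- for the odd polygon `S_{2m+1}` (`n = 2m+1`), the point
`x_{i,1} = λ₁ g_i + (1−λ₁) g_{i+m}` with `λ₁ = (3σ_n − 1)/(2σ_n)` lies on the segment
`L_{i+1} = conv{g_{i+1}, g_{i+m+1}}` (hence is the intersection point `L_i ∩ L_{i+1}`),
and its Euclidean distance from the centroid `(0,0,σ_n)` equals `σ_n r_n sin(π/(2n))`. -/
theorem polygon_intersection_point (m i : ℕ) (hm : 1 ≤ m) :
    ∀ lam₁ : ℝ, lam₁ = (3 * sigmaPoly (2 * m + 1) - 1) / (2 * sigmaPoly (2 * m + 1)) →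
    ∀ x : ℝ × ℝ × ℝ, x = lam₁ • gEff (2 * m + 1) i + (1 - lam₁) • gEff (2 * m + 1) (i + m) →
    (∃ t : ℝ, 0 ≤ t ∧ t ≤ 1 ∧
        x = t • gEff (2 * m + 1) (i + 1) + (1 - t) • gEff (2 * m + 1) (i + m + 1)) ∧
    Real.sqrt (x.1 ^ 2 + x.2.1 ^ 2 + (x.2.2 - sigmaPoly (2 * m + 1)) ^ 2)
      = sigmaPoly (2 * m + 1) * rPoly (2 * m + 1) * Real.sin (π / (2 * (2 * m + 1))) := by
  intro lam₁ hlam x hx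
  have hπ := Real.pi_pos
  have hm' : (1:ℝ) ≤ (m:ℝ) := by exact_mod_cast hm
  set N : ℝ := 2 * (m:ℝ) + 1 with hN
  have hNcast : ((2 * m + 1 : ℕ) : ℝ) = N := by push_cast [hN]; ring
  have hNpos : (0:ℝ) < N := by rw [hN]; linarith
  have hN3 : (3:ℝ) ≤ N := by rw [hN]; linarith
  set a : ℝ := π / N with ha
  have ha_pos : 0 < a := by rw [ha]; positivity
  have ha_le : a ≤ π / 3 := by
    rw [ha, div_le_div_iff₀ hNpos (by norm_num)]
    nlinarith
  have hc_ge : 1/2 ≤ Real.cos a := by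
    rw [show (1/2:ℝ) = Real.cos (π/3) by rw [Real.cos_pi_div_three]]
    exact Real.cos_le_cos_of_nonneg_of_le_pi ha_pos.le (by linarith) ha_le
  have hc_pos : 0 < Real.cos a := by linarith
  have h1c : (0:ℝ) < 1 + Real.cos a := by linarith
  have hσ : sigmaPoly (2 * m + 1) = Real.cos a / (1 + Real.cos a) := by
    simp only [sigmaPoly, rPoly, hNcast, ← ha]
    rw [show 1 + 1 / Real.cos a = (1 + Real.cos a) / Real.cos a by
      field_simp; ring, one_div_div]
  have hσ_pos : 0 < sigmaPoly (2 * m + 1) := by rw [hσ]; positivity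
  have hLam : lam₁ = (2 * Real.cos a - 1) / (2 * Real.cos a) := by
    rw [hlam, hσ]
    rw [div_eq_div_iff (by positivity) (by positivity)]
    field_simp
    ring
  -- angle identities
  have Am : 2 * ((i:ℝ) + (m:ℝ)) * π / N = (2 * (i:ℝ) * π / N - a) + π := by
    rw [ha, hN]; field_simp; ring
  have A1 : 2 * ((i:ℝ) + 1) * π / N = 2 * (i:ℝ) * π / N + 2 * a := by
    rw [ha]; field_simp
  have Am1 : 2 * ((i:ℝ) + (m:ℝ) + 1) * π / N = (2 * (i:ℝ) * π / N + a) + π := by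
    rw [ha, hN]; field_simp; ring
  have hb : a = 2 * (π / (2 * N)) := by rw [ha]; field_simp
  have hsb_nonneg : 0 ≤ Real.sin (π / (2 * N)) := by
    apply Real.sin_nonneg_of_nonneg_of_le_pi
    · positivity
    · rw [div_le_iff₀ (by positivity)]
      nlinarith
  have hsb2 : Real.sin (π / (2 * N)) ^ 2 = (1 - Real.cos a) / 2 := by
    have h2 := Real.cos_two_mul (π / (2 * N))
    rw [← hb] at h2
    have hpyth := Real.sin_sq_add_cos_sq (π / (2 * N))
    linarith
  subst hx
  constructor
  · refine ⟨1 - lam₁, ?_, ?_, ?_⟩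
    · have h : (2 * Real.cos a - 1) / (2 * Real.cos a) ≤ 1 := by
        rw [div_le_one (by positivity)]; linarith
      rw [hLam]; linarith
    · have h : (0:ℝ) ≤ (2 * Real.cos a - 1) / (2 * Real.cos a) :=
        div_nonneg (by linarith) (by positivity)
      rw [hLam]; linarith
    · simp only [gEff, Prod.smul_mk, smul_eq_mul, Prod.mk_add_mk, Prod.mk.injEq, hNcast]
      push_cast
      rw [Am, A1, Am1]
      simp only [Real.cos_add_pi, Real.sin_add_pi, Real.cos_sub, Real.sin_sub,
        Real.cos_add, Real.sin_add, Real.cos_two_mul, Real.sin_two_mul, Real.cos_pi, Real.sin_pi]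
      rw [hLam]
      refine ⟨?_, ?_, by ring⟩ <;>
      · field_simp
        ring
  · simp only [gEff, Prod.smul_mk, smul_eq_mul, Prod.mk_add_mk, hNcast]
    push_cast
    rw [Am]
    simp only [Real.cos_add_pi, Real.sin_add_pi, Real.cos_sub, Real.sin_sub]
    set σ : ℝ := sigmaPoly (2 * m + 1) with hσdef
    set θc : ℝ := Real.cos (2 * (i:ℝ) * π / N) with hθc
    set θs : ℝ := Real.sin (2 * (i:ℝ) * π / N) with hθs
    have e1 : (lam₁ * (σ * θc) + (1 - lam₁) * (σ * -(θc * Real.cos a + θs * Real.sin a))) ^ 2 +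
        (lam₁ * (σ * θs) + (1 - lam₁) * (σ * -(θs * Real.cos a - θc * Real.sin a))) ^ 2 +
        (lam₁ * σ + (1 - lam₁) * σ - σ) ^ 2
        = σ ^ 2 * ((lam₁ - (1 - lam₁) * Real.cos a) ^ 2 +
            (1 - lam₁) ^ 2 * (1 - Real.cos a ^ 2)) := by
      have hpythθ := Real.sin_sq_add_cos_sq (2 * (i:ℝ) * π / N)
      have hpytha := Real.sin_sq_add_cos_sq a
      rw [← hθc, ← hθs] at hpythθ
      linear_combination
        (σ ^ 2 * ((lam₁ - (1 - lam₁) * Real.cos a) ^ 2 +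
          ((1 - lam₁) * Real.sin a) ^ 2)) * hpythθ +
        (σ ^ 2 * (1 - lam₁) ^ 2) * hpytha
    have e2 : (lam₁ - (1 - lam₁) * Real.cos a) ^ 2 +
        (1 - lam₁) ^ 2 * (1 - Real.cos a ^ 2)
        = (1 - Real.cos a) / (2 * Real.cos a ^ 2) := by
      rw [hLam]
      field_simp
      ring
    rw [e1, e2]
    have e3 : σ ^ 2 * ((1 - Real.cos a) / (2 * Real.cos a ^ 2))
        = (σ * rPoly (2 * m + 1) * Real.sin (π / (2 * N))) ^ 2 := by
      have hr : rPoly (2 * m + 1) = 1 / Real.cos a := by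
        simp only [rPoly, hNcast, ← ha]
      rw [hr, show (σ * (1 / Real.cos a) * Real.sin (π / (2 * N))) ^ 2
          = σ ^ 2 * (1 / Real.cos a) ^ 2 * Real.sin (π / (2 * N)) ^ 2 by ring, hsb2]
      ring
    rw [e3, Real.sqrt_sq]
    have hr_pos : 0 < rPoly (2 * m + 1) := by
      simp only [rPoly, hNcast, ← ha]; positivity
    exact mul_nonneg (mul_nonneg hσ_pos.le hr_pos.le) hsb_nonneg

end
end
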